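/- arXiv:1807.09892 — 4 statements merged into one kernel-verified Lean document; each statement's English description precedes it below -/
import Mathlib

section
/- If f : ℝⁿ → ℂ is continuous and 1-periodic (f(x+k)=f(x) for all k ∈ ℤⁿ), and (ε_m) is a sequence of positive reals tending to 0, then lim_{m→∞} ε_m^{n/2} ∫_{ℝⁿ} e^{-π ε_m |x|²} f(x) dx = ∫_{[0,1]ⁿ} f(x) dx. -/
open MeasureTheory Real Filter Topology

private lemma gauss_term_eq (e x : ℝ) (k : ℤ) :
    Complex.exp ((-(π * e * x ^ 2) : ℝ) : ℂ) *
      jacobiTheta₂_term k (Complex.I * e * x) (Complex.I * e)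
      = ((rexp (-(π * e * (x + k) ^ 2)) : ℝ) : ℂ) := by
  rw [jacobiTheta₂_term, ← Complex.exp_add, Complex.ofReal_exp]
  congr 1
  push_cast
  linear_combination (π * e * (k:ℂ) ^ 2 + 2 * π * e * k * x) * Complex.I_sq

private lemma theta_fe {e : ℝ} (he : 0 < e) (x : ℝ) :
    Complex.exp ((-(π * e * x ^ 2) : ℝ) : ℂ) * jacobiTheta₂ (Complex.I * e * x) (Complex.I * e)
      = ((e ^ (-(1/2) : ℝ) : ℝ) : ℂ) * jacobiTheta₂ x (Complex.I / e) := by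
  have he' : (e : ℂ) ≠ 0 := Complex.ofReal_ne_zero.mpr he.ne'
  rw [jacobiTheta₂_functional_equation (Complex.I * e * x) (Complex.I * e)]
  have h1 : -Complex.I * (Complex.I * e) = (e : ℂ) := by
    linear_combination (-(e:ℂ)) * Complex.I_sq
  have h2 : (Complex.I * e * x) / (Complex.I * e) = (x : ℂ) := by
    field_simp
  have h3 : (-1 : ℂ) / (Complex.I * e) = Complex.I / e := by
    rw [div_eq_div_iff (by simp [Complex.I_ne_zero, he']) he']
    linear_combination (-(e:ℂ)) * Complex.I_sq
  have h4 : -(π:ℂ) * Complex.I * (Complex.I * e * x) ^ 2 / (Complex.I * e)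
      = ((π * e * x ^ 2 : ℝ) : ℂ) := by
    push_cast
    field_simp
    linear_combination (-((x:ℂ) ^ 2)) * Complex.I_sq
  rw [h1, h2, h3, h4]
  have h5 : ((e : ℂ)) ^ ((1:ℂ)/2) = ((e ^ ((1:ℝ)/2) : ℝ) : ℂ) := by
    rw [Complex.ofReal_cpow he.le]
    norm_num
  rw [h5]
  rw [show Complex.exp ((-(π * e * x ^ 2) : ℝ) : ℂ) * ((1 / ((e ^ ((1:ℝ)/2) : ℝ) : ℂ)) *
      Complex.exp ((π * e * x ^ 2 : ℝ) : ℂ) * jacobiTheta₂ x (Complex.I / e)) =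
      Complex.exp (((-(π * e * x ^ 2) : ℝ) : ℂ) + ((π * e * x ^ 2 : ℝ) : ℂ)) *
      ((1 / ((e ^ ((1:ℝ)/2) : ℝ) : ℂ)) * jacobiTheta₂ x (Complex.I / e)) by
    rw [Complex.exp_add]; ring]
  have h6 : ((-(π * e * x ^ 2) : ℝ) : ℂ) + ((π * e * x ^ 2 : ℝ) : ℂ) = 0 := by push_cast; ring
  rw [h6, Complex.exp_zero, one_mul]
  congr 1
  rw [Real.rpow_neg he.le, Complex.ofReal_inv, one_div]

private lemma hasSum_gauss_per {e : ℝ} (he : 0 < e) (x : ℝ) :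
    HasSum (fun k : ℤ => ((rexp (-(π * e * (x + k) ^ 2)) : ℝ) : ℂ))
      (((e ^ (-(1/2) : ℝ) : ℝ) : ℂ) * jacobiTheta₂ x (Complex.I / e)) := by
  have him : 0 < (Complex.I * e).im := by simpa using he
  have h := (hasSum_jacobiTheta₂_term (Complex.I * e * x) him).mul_left
    (Complex.exp ((-(π * e * x ^ 2) : ℝ) : ℂ))
  rw [theta_fe he x] at h
  exact h.congr_fun fun k => (gauss_term_eq e x k).symm

private lemma summable_gauss_per {e : ℝ} (he : 0 < e) (x : ℝ) :
    Summable (fun k : ℤ => rexp (-(π * e * (x + k) ^ 2))) :=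
  Complex.summable_ofReal.mp (hasSum_gauss_per he x).summable

private noncomputable def Dfun (e : ℝ) : ℝ :=
  ∑' k : ℤ, (if k = 0 then (0:ℝ) else rexp (-π * k ^ 2 * e⁻¹))

private lemma summable_Dfun {e : ℝ} (he : 0 < e) :
    Summable (fun k : ℤ => if k = 0 then (0:ℝ) else rexp (-π * k ^ 2 * e⁻¹)) := by
  have h := summable_gauss_per (x := 0) (e := e⁻¹) (by positivity)
  refine h.of_nonneg_of_le (fun k => by positivity) (fun k => ?_)
  split
  · positivity
  · apply le_of_eq; congr 1; ring

private lemma theta_close {e : ℝ} (he : 0 < e) (x : ℝ) :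
    ‖jacobiTheta₂ x (Complex.I / e) - 1‖ ≤ Dfun e := by
  have him : 0 < (Complex.I / (e:ℂ)).im := by
    rw [Complex.div_ofReal_im]
    simpa using (by positivity : (0:ℝ) < 1 / e)
  have h := hasSum_jacobiTheta₂_term (x : ℂ) him
  have h1 : HasSum (fun k : ℤ => if k = 0 then (1:ℂ) else 0) 1 := hasSum_ite_eq 0 1
  have h2 := h.sub h1
  have hnorm : ∀ k : ℤ, ‖jacobiTheta₂_term k (x : ℂ) (Complex.I / e) - (if k = 0 then (1:ℂ) else 0)‖
      = (if k = 0 then (0:ℝ) else rexp (-π * k ^ 2 * e⁻¹)) := by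
    intro k
    by_cases hk : k = 0
    · simp [hk, jacobiTheta₂_term]
    · simp only [hk, if_neg, if_false, sub_zero, norm_jacobiTheta₂_term]
      rw [Complex.div_ofReal_im, Complex.ofReal_im]
      norm_num [Complex.I_im]
  rw [← h2.tsum_eq]
  refine le_trans (norm_tsum_le_tsum_norm ?_) (le_of_eq ?_)
  · exact (summable_Dfun he).congr fun k => (hnorm k).symm
  · rw [Dfun]
    exact tsum_congr hnorm

private lemma Dfun_nonneg {e : ℝ} (he : 0 < e) : 0 ≤ Dfun e :=
  tsum_nonneg fun k => by positivity

private lemma Dfun_le {e : ℝ} (he : 0 < e) (he1 : e ≤ 1) :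
    Dfun e ≤ (rexp π * rexp (-π * e⁻¹)) * Dfun 1 := by
  rw [Dfun, Dfun, ← tsum_mul_left]
  refine Summable.tsum_le_tsum (fun k => ?_) (summable_Dfun he)
    ((summable_Dfun one_pos).mul_left _)
  by_cases hk : k = 0
  · simp [hk]
  · simp only [hk, if_neg, if_false]
    rw [← Real.exp_add, ← Real.exp_add]
    rw [Real.exp_le_exp]
    have hk1 : (1:ℝ) ≤ (k:ℝ) ^ 2 := by
      have : (1:ℤ) ≤ k ^ 2 := by
        rcases lt_or_gt_of_ne hk with h | h <;> nlinarith
      exact_mod_cast this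
    have h1e : (1:ℝ) ≤ e⁻¹ := (one_le_inv₀ he).mpr he1
    have hkey : 0 ≤ π * (((k:ℝ) ^ 2 - 1) * (e⁻¹ - 1)) :=
      mul_nonneg Real.pi_pos.le (mul_nonneg (by linarith) (by linarith))
    norm_num
    nlinarith [Real.pi_pos]

private lemma norm_prod_sub_one_le {ι : Type*} (s : Finset ι) (a : ι → ℂ) {η : ℝ} (hη : 0 ≤ η)
    (h : ∀ i ∈ s, ‖a i - 1‖ ≤ η) : ‖(∏ i ∈ s, a i) - 1‖ ≤ (1 + η) ^ s.card - 1 := by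
  induction s using Finset.cons_induction with
  | empty => simp
  | cons i s his ih =>
    rw [Finset.prod_cons, Finset.card_cons]
    have hi := h i (Finset.mem_cons_self i s)
    have hs := ih fun j hj => h j (Finset.mem_cons_of_mem hj)
    have hai : ‖a i‖ ≤ 1 + η := by
      have := norm_sub_norm_le (a i) (1:ℂ)
      simp only [norm_one] at this
      linarith
    have key : a i * ∏ j ∈ s, a j - 1 = a i * ((∏ j ∈ s, a j) - 1) + (a i - 1) := by ring
    rw [key]
    calc ‖a i * ((∏ j ∈ s, a j) - 1) + (a i - 1)‖
        ≤ ‖a i‖ * ‖(∏ j ∈ s, a j) - 1‖ + ‖a i - 1‖ := by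
          refine le_trans (norm_add_le _ _) ?_
          rw [norm_mul]
      _ ≤ (1 + η) * ((1 + η) ^ s.card - 1) + η := by
          have h0 : (0:ℝ) ≤ ‖(∏ j ∈ s, a j) - 1‖ := norm_nonneg _
          have h1 : (0:ℝ) ≤ (1 + η) ^ s.card - 1 := by
            have : (1:ℝ) ≤ (1+η) ^ s.card := one_le_pow₀ (by linarith)
            linarith
          nlinarith
      _ = (1 + η) ^ (s.card + 1) - 1 := by rw [pow_succ]; ring

private lemma pi_prod_tsum : ∀ (N : ℕ) (g : Fin N → ℤ → ℂ), (∀ i, Summable fun k => ‖g i k‖) →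
    Summable (fun k : Fin N → ℤ => ‖∏ i, g i (k i)‖) ∧
      ((∑' k : Fin N → ℤ, ∏ i, g i (k i)) = ∏ i, ∑' k : ℤ, g i k) := by
  intro N
  induction N with
  | zero =>
    intro g hg
    constructor
    · exact .of_finite
    · rw [tsum_eq_single (default : Fin 0 → ℤ) (fun b hb => absurd (Subsingleton.elim b default) hb)]
      simp
  | succ n ih =>
    intro g hg
    let e : (Fin (n+1) → ℤ) ≃ ℤ × (Fin n → ℤ) :=
      ⟨fun k => (k 0, fun i => k i.succ), fun p => Fin.cons p.1 p.2,
        fun k => funext fun i => Fin.cases rfl (fun j => rfl) i,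
        fun p => by simp⟩
    obtain ⟨ihS, ihT⟩ := ih (fun i => g i.succ) (fun i => hg i.succ)
    have hG : Summable (fun p : ℤ × (Fin n → ℤ) => ‖g 0 p.1 * ∏ i, g i.succ (p.2 i)‖) := by
      have h2 := (hg 0).mul_of_nonneg ihS (fun k => norm_nonneg _) (fun q => norm_nonneg _)
      exact h2.congr fun p => (norm_mul _ _).symm
    constructor
    · have h3 : Summable ((fun p : ℤ × (Fin n → ℤ) => ‖g 0 p.1 * ∏ i, g i.succ (p.2 i)‖) ∘ e) :=
        (e.summable_iff).mpr hG
      exact h3.congr fun k => by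
        simp only [Function.comp_apply, Fin.prod_univ_succ]
        rfl
    · have h4 : (∑' k : Fin (n+1) → ℤ, ∏ i, g i (k i))
          = ∑' k : Fin (n+1) → ℤ, (g 0 (k 0) * ∏ i : Fin n, g i.succ (k i.succ)) :=
        tsum_congr fun k => Fin.prod_univ_succ _
      rw [h4, show (∑' k : Fin (n+1) → ℤ, (g 0 (k 0) * ∏ i : Fin n, g i.succ (k i.succ)))
          = ∑' p : ℤ × (Fin n → ℤ), g 0 p.1 * ∏ i, g i.succ (p.2 i) from
          e.tsum_eq (fun p : ℤ × (Fin n → ℤ) => g 0 p.1 * ∏ i, g i.succ (p.2 i)),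
        ← tsum_mul_tsum_of_summable_norm (hg 0) ihS, ihT, Fin.prod_univ_succ]

private def box (n : ℕ) (k : Fin n → ℤ) : Set (Fin n → ℝ) :=
  Set.univ.pi fun i => Set.Ico (k i : ℝ) (k i + 1)

private lemma mem_box {n : ℕ} {k : Fin n → ℤ} {x : Fin n → ℝ} :
    x ∈ box n k ↔ ∀ i, (k i : ℝ) ≤ x i ∧ x i < k i + 1 := by
  simp [box, Set.mem_pi]

private lemma box_eq_floor {n : ℕ} {k : Fin n → ℤ} {x : Fin n → ℝ} (hx : x ∈ box n k) :
    k = fun i => ⌊x i⌋ := by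
  funext i
  obtain ⟨h1, h2⟩ := mem_box.mp hx i
  exact (Int.floor_eq_iff.mpr ⟨h1, h2⟩).symm

private lemma box_measurable {n : ℕ} (k : Fin n → ℤ) : MeasurableSet (box n k) :=
  MeasurableSet.univ_pi fun i => measurableSet_Ico

private lemma box_cover (n : ℕ) : (⋃ k : Fin n → ℤ, box n k) = Set.univ := by
  refine Set.eq_univ_of_forall fun x => Set.mem_iUnion.mpr ⟨fun i => ⌊x i⌋, ?_⟩
  exact mem_box.mpr fun i => ⟨Int.floor_le _, Int.lt_floor_add_one _⟩

private lemma box_disjoint (n : ℕ) : Pairwise (Function.onFun Disjoint (box n)) := by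
  intro k k' hkk'
  refine Set.disjoint_left.mpr fun x hx hx' => hkk' ?_
  rw [box_eq_floor hx, box_eq_floor hx']

private lemma volume_box {n : ℕ} (k : Fin n → ℤ) : volume (box n k) = 1 := by
  rw [box, volume_pi_pi]
  simp [Real.volume_Ico]

private lemma box_image {n : ℕ} (k : Fin n → ℤ) :
    (fun x : Fin n → ℝ => x + fun i => (k i : ℝ)) '' box n 0 = box n k := by
  ext x
  constructor
  · rintro ⟨y, hy, rfl⟩
    refine mem_box.mpr fun i => ?_
    obtain ⟨h1, h2⟩ := mem_box.mp hy i
    simp only [Pi.add_apply, Int.cast_zero, Pi.zero_apply] at h1 h2 ⊢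
    constructor <;> [linarith; linarith]
  · intro hx
    refine ⟨x - fun i => (k i : ℝ), mem_box.mpr fun i => ?_, by ext i; simp⟩
    obtain ⟨h1, h2⟩ := mem_box.mp hx i
    simp only [Pi.sub_apply, Pi.zero_apply, Int.cast_zero]
    constructor <;> [linarith; linarith]

private lemma sq_shift_ge {x : ℝ} (hx0 : 0 ≤ x) (hx1 : x < 1) (t : ℝ) :
    t ^ 2 / 4 - 1 ≤ (x + t) ^ 2 := by
  rcases le_or_gt 0 t with h | h
  · nlinarith
  · rcases le_or_gt (-2) t with h2 | h2
    · nlinarith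
    · nlinarith [mul_pos (by linarith : (0:ℝ) < 1 - x) (by linarith : (0:ℝ) < -(x + 2*t + 1))]

private lemma summable_gauss_sq {c : ℝ} (hc : 0 < c) :
    Summable (fun j : ℤ => rexp (-(π * c * (j:ℝ) ^ 2))) :=
  (summable_gauss_per hc 0).congr fun j => by norm_num

private lemma norm_ofReal_exp (r : ℝ) : ‖((rexp r : ℝ) : ℂ)‖ = rexp r := by
  rw [Complex.norm_real, Real.norm_of_nonneg (Real.exp_pos r).le]

private lemma summable_prod_gauss {n : ℕ} {c : ℝ} (hc : 0 < c) :
    Summable (fun k : Fin n → ℤ => ∏ i, rexp (-(π * c * (k i : ℝ) ^ 2))) := by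
  have h := (pi_prod_tsum n (fun _ j => ((rexp (-(π * c * (j:ℝ) ^ 2)) : ℝ) : ℂ))
    (fun i => (summable_gauss_sq hc).congr fun j => (norm_ofReal_exp _).symm)).1
  refine h.congr fun k => ?_
  rw [← Complex.ofReal_prod, Complex.norm_real, Real.norm_of_nonneg (by positivity)]

private lemma exp_sum_eq {n : ℕ} (e : ℝ) (y : Fin n → ℝ) :
    rexp (-(π * e * ∑ i, y i ^ 2)) = ∏ i, rexp (-(π * e * y i ^ 2)) := by
  rw [← Real.exp_sum]
  congr 1
  rw [Finset.mul_sum, ← Finset.sum_neg_distrib]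

private lemma key_identity {n : ℕ} (f : (Fin n → ℝ) → ℂ) (hf : Continuous f)
    (hper : ∀ (x : Fin n → ℝ) (k : Fin n → ℤ), f (x + fun i => (k i : ℝ)) = f x)
    {C : ℝ} (hC : ∀ x, ‖f x‖ ≤ C) {e : ℝ} (he : 0 < e) :
    ((e ^ ((n : ℝ) / 2) : ℝ) : ℂ) *
        ∫ x : Fin n → ℝ, ((rexp (-(π * e * ∑ i, x i ^ 2)) : ℝ) : ℂ) * f x
      = ∫ x in box n 0, (∏ i, jacobiTheta₂ (x i) (Complex.I / e)) * f x := by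
  have hC0 : 0 ≤ C := le_trans (norm_nonneg _) (hC 0)
  set F : (Fin n → ℝ) → ℂ := fun x => ((rexp (-(π * e * ∑ i, x i ^ 2)) : ℝ) : ℂ) * f x with hF
  -- continuity and integrability of F
  have hFcont : Continuous F := by
    refine Continuous.mul (Complex.continuous_ofReal.comp (Real.continuous_exp.comp ?_)) hf
    exact (continuous_const.mul (continuous_finset_sum _ fun i _ => (continuous_apply i).pow 2)).neg
  have hgauss : Integrable (fun x : Fin n → ℝ => ∏ i, rexp (-(π * e * x i ^ 2))) := by
    refine Integrable.fintype_prod (f := fun (_ : Fin n) (t : ℝ) => rexp (-(π * e * t ^ 2))) fun i => ?_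
    have := integrable_exp_neg_mul_sq (b := π * e) (by positivity)
    exact this.congr (Filter.EventuallyEq.of_eq (funext fun t => by ring_nf))
  have hFint : Integrable F := by
    refine Integrable.mono' (hgauss.const_mul C) hFcont.aestronglyMeasurable
      (Filter.Eventually.of_forall fun x => ?_)
    rw [hF, norm_mul, norm_ofReal_exp, exp_sum_eq]
    calc (∏ i, rexp (-(π * e * x i ^ 2))) * ‖f x‖
        ≤ (∏ i, rexp (-(π * e * x i ^ 2))) * C :=
          mul_le_mul_of_nonneg_left (hC x) (by positivity)
      _ = C * ∏ i, rexp (-(π * e * x i ^ 2)) := mul_comm _ _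
  -- step A: split integral over boxes
  have hsplit : (∫ x, F x) = ∑' k : Fin n → ℤ, ∫ x in box n k, F x := by
    rw [← setIntegral_univ, ← box_cover n]
    exact integral_iUnion box_measurable (box_disjoint n) hFint.integrableOn
  set Φ : (Fin n → ℤ) → (Fin n → ℝ) → ℂ :=
    fun k x => ((rexp (-(π * e * ∑ i, (x i + k i) ^ 2)) : ℝ) : ℂ) * f x with hΦ
  have hFshift : ∀ (k : Fin n → ℤ) (x : Fin n → ℝ), F (x + fun i => (k i : ℝ)) = Φ k x := by
    intro k x
    show ((rexp (-(π * e * ∑ i, ((x + fun i => (k i:ℝ)) i) ^ 2)) : ℝ) : ℂ)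
        * f (x + fun i => (k i : ℝ)) = _
    rw [hper x k]
    simp only [hΦ, Pi.add_apply]
  -- step B: translate each box to box 0
  have htrans : ∀ k : Fin n → ℤ, (∫ x in box n k, F x) = ∫ x in box n 0, Φ k x := by
    intro k
    rw [← box_image k,
      (measurePreserving_add_right volume _).setIntegral_image_emb
        (measurableEmbedding_addRight _) F _]
    exact setIntegral_congr_fun (box_measurable 0) fun x _ => hFshift k x
  -- step C: swap sum and integral
  have hΦint : ∀ k : Fin n → ℤ, Integrable (Φ k) (volume.restrict (box n 0)) := by
    intro k
    have h1 : Integrable (fun x : Fin n → ℝ => F (x + fun i => (k i : ℝ))) volume :=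
      ((measurePreserving_add_right volume _).integrable_comp_emb
        (measurableEmbedding_addRight _)).mpr hFint
    exact (h1.integrableOn (s := box n 0)).congr
      (Filter.Eventually.of_forall fun x => hFshift k x)
  have hvol : (volume (box n 0)).toReal = 1 := by rw [volume_box]; simp
  have hbound : ∀ k : Fin n → ℤ, (∫ x in box n 0, ‖Φ k x‖)
      ≤ (C * rexp (π * e) ^ n) * ∏ i, rexp (-(π * (e/4) * (k i : ℝ) ^ 2)) := by
    intro k
    have hle : ∀ x ∈ box n 0, ‖‖Φ k x‖‖
        ≤ (C * rexp (π * e) ^ n) * ∏ i, rexp (-(π * (e/4) * (k i:ℝ) ^ 2)) := by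
      intro x hx
      rw [Real.norm_of_nonneg (norm_nonneg _), norm_mul, norm_ofReal_exp, exp_sum_eq]
      have hprod : (∏ i, rexp (-(π * e * (x i + k i) ^ 2)))
          ≤ ∏ i, (rexp (π * e) * rexp (-(π * (e/4) * (k i:ℝ) ^ 2))) := by
        refine Finset.prod_le_prod (fun i _ => (Real.exp_pos _).le) (fun i _ => ?_)
        rw [← Real.exp_add, Real.exp_le_exp]
        obtain ⟨h1, h2⟩ := mem_box.mp hx i
        have h3 := sq_shift_ge (by simpa using h1) (by simpa using h2) ((k i : ℝ))
        have h4 := mul_le_mul_of_nonneg_left h3 (le_of_lt (mul_pos Real.pi_pos he))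
        nlinarith [h4]
      calc (∏ i, rexp (-(π * e * (x i + k i) ^ 2))) * ‖f x‖
          ≤ (∏ i, (rexp (π * e) * rexp (-(π * (e/4) * (k i:ℝ) ^ 2)))) * C :=
            mul_le_mul hprod (hC x) (norm_nonneg _) (by positivity)
        _ = (C * rexp (π * e) ^ n) * ∏ i, rexp (-(π * (e/4) * (k i:ℝ) ^ 2)) := by
            rw [Finset.prod_mul_distrib, Finset.prod_const, Finset.card_univ,
              Fintype.card_fin]
            ring
    have h5 := norm_setIntegral_le_of_norm_le_const (μ := volume)
      (s := box n 0) (by rw [volume_box]; exact ENNReal.one_lt_top) hle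
    rw [measureReal_def, hvol, mul_one] at h5
    exact le_trans (Real.le_norm_self _) h5
  have hsum : Summable (fun k : Fin n → ℤ => ∫ x in box n 0, ‖Φ k x‖) := by
    refine Summable.of_nonneg_of_le
      (fun k => integral_nonneg fun x => norm_nonneg _) hbound ?_
    exact (summable_prod_gauss (n := n) (by positivity : (0:ℝ) < e/4)).mul_left _
  have hswap := integral_tsum_of_summable_integral_norm (μ := volume.restrict (box n 0))
    hΦint hsum
  -- step D: pointwise evaluation of the sum
  have hpt : ∀ x : Fin n → ℝ, (∑' k : Fin n → ℤ, Φ k x)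
      = ((((e ^ (-(1/2):ℝ)) ^ n : ℝ) : ℂ) *
          ((∏ i, jacobiTheta₂ (x i) (Complex.I / e)) * f x)) := by
    intro x
    have hsummable_i : ∀ i : Fin n,
        Summable fun j : ℤ => ‖((rexp (-(π * e * (x i + j) ^ 2)) : ℝ):ℂ)‖ :=
      fun i => (summable_gauss_per he (x i)).congr fun j => (norm_ofReal_exp _).symm
    have hT := (pi_prod_tsum n
      (fun i j => ((rexp (-(π * e * (x i + j) ^ 2)) : ℝ):ℂ)) hsummable_i).2
    calc ∑' k : Fin n → ℤ, Φ k x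
        = (∑' k : Fin n → ℤ, ∏ i, ((rexp (-(π * e * (x i + k i) ^ 2)) : ℝ):ℂ)) * f x := by
          rw [← tsum_mul_right]
          refine tsum_congr fun k => ?_
          show ((rexp (-(π * e * ∑ i, (x i + k i) ^ 2)) : ℝ):ℂ) * f x = _
          rw [exp_sum_eq, Complex.ofReal_prod]
      _ = (∏ i, ∑' j : ℤ, ((rexp (-(π * e * (x i + j) ^ 2)) : ℝ):ℂ)) * f x := by rw [hT]
      _ = (∏ i : Fin n, (((e ^ (-(1/2):ℝ) : ℝ):ℂ) * jacobiTheta₂ (x i) (Complex.I / e)))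
            * f x := by
          congr 1
          exact Finset.prod_congr rfl fun i _ => (hasSum_gauss_per he (x i)).tsum_eq
      _ = ((((e ^ (-(1/2):ℝ)) ^ n : ℝ) : ℂ) *
            ((∏ i, jacobiTheta₂ (x i) (Complex.I / e)) * f x)) := by
          rw [Finset.prod_mul_distrib, Finset.prod_const, Finset.card_univ,
            Fintype.card_fin, ← Complex.ofReal_pow]
          ring
  -- step E: combine
  rw [hsplit, tsum_congr htrans, hswap]
  simp_rw [hpt]
  rw [integral_const_mul, ← mul_assoc, ← Complex.ofReal_mul]
  have hpow : e ^ ((n:ℝ)/2) * (e ^ (-(1/2):ℝ)) ^ n = 1 := by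
    have h0 : (n:ℝ)/2 + (-(1/2)) * n = 0 := by ring
    rw [← Real.rpow_natCast (e ^ (-(1/2):ℝ)) n, ← Real.rpow_mul he.le,
      ← Real.rpow_add he, h0, Real.rpow_zero]
  rw [hpow, Complex.ofReal_one, one_mul]

/-- Gaussian averaging lemma: for continuous 1-periodic `f` on `ℝⁿ` and positive
`ε_m → 0`, `ε_m^{n/2} ∫_{ℝⁿ} e^{-π ε_m |x|²} f(x) dx → ∫_{[0,1]ⁿ} f(x) dx`. -/
theorem stmt0 {n : ℕ} (f : (Fin n → ℝ) → ℂ) (hf : Continuous f)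
    (hper : ∀ (x : Fin n → ℝ) (k : Fin n → ℤ), f (x + fun i => (k i : ℝ)) = f x)
    (ε : ℕ → ℝ) (hεpos : ∀ m, 0 < ε m) (hε0 : Tendsto ε atTop (nhds (0 : ℝ))) :
    Tendsto (fun m : ℕ =>
        ((ε m ^ ((n : ℝ) / 2) : ℝ) : ℂ) *
          ∫ x : Fin n → ℝ, ((Real.exp (-(π * ε m * ∑ i, x i ^ 2)) : ℝ) : ℂ) * f x)
      atTop (nhds (∫ x in Set.Icc (0 : Fin n → ℝ) 1, f x)) := by
  -- boundedness of f
  obtain ⟨C, hC⟩ : ∃ C : ℝ, ∀ x, ‖f x‖ ≤ C := by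
    obtain ⟨C, hC⟩ := (isCompact_Icc (a := (0 : Fin n → ℝ)) (b := 1)).exists_bound_of_continuousOn
      hf.continuousOn
    refine ⟨C, fun x => ?_⟩
    have hx : (x + fun i => ((-⌊x i⌋ : ℤ) : ℝ)) ∈ Set.Icc (0 : Fin n → ℝ) 1 := by
      constructor <;> intro i <;>
        simp only [Pi.add_apply, Pi.zero_apply, Pi.one_apply, Int.cast_neg]
      · have := Int.fract_nonneg (x i)
        rw [Int.fract] at this
        linarith
      · have := (Int.fract_lt_one (x i)).le
        rw [Int.fract] at this
        linarith
    calc ‖f x‖ = ‖f (x + fun i => ((-⌊x i⌋ : ℤ) : ℝ))‖ := by rw [hper x fun i => -⌊x i⌋]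
      _ ≤ C := hC _ hx
  have hC0 : 0 ≤ C := le_trans (norm_nonneg _) (hC 0)
  -- rewrite the target integral over the half-open box
  have hbox_ae : (box n 0 : Set (Fin n → ℝ)) =ᵐ[volume] Set.Icc (0 : Fin n → ℝ) 1 := by
    have h1 : box n 0 = Set.univ.pi fun _ : Fin n => Set.Ico (0:ℝ) 1 := by simp [box]
    rw [h1, MeasureTheory.volume_pi]
    exact MeasureTheory.Measure.univ_pi_Ico_ae_eq_Icc
  have hTgt : (∫ x in Set.Icc (0 : Fin n → ℝ) 1, f x) = ∫ x in box n 0, f x :=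
    (setIntegral_congr_set hbox_ae).symm
  rw [hTgt]
  haveI hfin : IsFiniteMeasure (volume.restrict (box n 0)) :=
    ⟨by rw [Measure.restrict_apply_univ, volume_box]; exact ENNReal.one_lt_top⟩
  have hvol : (volume (box n 0)).toReal = 1 := by rw [volume_box]; simp
  -- per-m difference estimate
  have hdiff : ∀ m, ‖(((ε m ^ ((n : ℝ) / 2) : ℝ) : ℂ) *
      ∫ x : Fin n → ℝ, ((Real.exp (-(π * ε m * ∑ i, x i ^ 2)) : ℝ) : ℂ) * f x) -
      ∫ x in box n 0, f x‖ ≤ ((1 + Dfun (ε m)) ^ n - 1) * C := by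
    intro m
    set e := ε m with he_def
    have he : 0 < e := hεpos m
    have him : 0 < (Complex.I / (e:ℂ)).im := by
      rw [Complex.div_ofReal_im]
      simpa using (by positivity : (0:ℝ) < 1 / e)
    rw [key_identity f hf hper hC he]
    have hθc1 : Continuous fun t : ℂ => jacobiTheta₂ t (Complex.I / e) :=
      continuous_iff_continuousAt.mpr fun t =>
        ContinuousAt.comp (f := fun s : ℂ => (s, Complex.I / (e:ℂ)))
          (g := fun p : ℂ × ℂ => jacobiTheta₂ p.1 p.2)
          (continuousAt_jacobiTheta₂ t him) (continuousAt_id.prodMk continuousAt_const)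
    have hθc : Continuous fun x : Fin n → ℝ => ∏ i, jacobiTheta₂ (x i) (Complex.I / e) := by
      refine continuous_finset_prod _ fun i _ => ?_
      exact hθc1.comp (Complex.continuous_ofReal.comp (continuous_apply i))
    have hη0 : 0 ≤ Dfun e := Dfun_nonneg he
    have hθbd : ∀ x : Fin n → ℝ, ‖(∏ i, jacobiTheta₂ (x i) (Complex.I / e)) - 1‖
        ≤ (1 + Dfun e) ^ n - 1 := by
      intro x
      have := norm_prod_sub_one_le Finset.univ (fun i => jacobiTheta₂ (x i) (Complex.I / e))
        hη0 (fun i _ => theta_close he (x i))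
      simpa using this
    have hpow1 : (1:ℝ) ≤ (1 + Dfun e) ^ n := one_le_pow₀ (by linarith)
    -- integrability on the box
    have hint1 : Integrable (fun x : Fin n → ℝ =>
        (∏ i, jacobiTheta₂ (x i) (Complex.I / e)) * f x) (volume.restrict (box n 0)) := by
      refine Integrable.mono' (integrable_const (((1 + Dfun e) ^ n) * C))
        (hθc.mul hf).aestronglyMeasurable (Filter.Eventually.of_forall fun x => ?_)
      rw [norm_mul]
      have h1 : ‖∏ i, jacobiTheta₂ (x i) (Complex.I / e)‖ ≤ (1 + Dfun e) ^ n := by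
        have := norm_sub_norm_le (∏ i, jacobiTheta₂ (x i) (Complex.I / e)) 1
        simp only [norm_one] at this
        have h2 := hθbd x
        linarith
      exact mul_le_mul h1 (hC x) (norm_nonneg _) (by positivity)
    have hint2 : Integrable f (volume.restrict (box n 0)) := by
      refine Integrable.mono' (integrable_const C) hf.aestronglyMeasurable
        (Filter.Eventually.of_forall fun x => hC x)
    rw [← integral_sub hint1 hint2]
    have hinteq : ∀ x : Fin n → ℝ, (∏ i, jacobiTheta₂ (x i) (Complex.I / e)) * f x - f x
        = ((∏ i, jacobiTheta₂ (x i) (Complex.I / e)) - 1) * f x := fun x => by ring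
    simp_rw [hinteq]
    have h6 := norm_setIntegral_le_of_norm_le_const (μ := volume) (s := box n 0)
      (C := ((1 + Dfun e) ^ n - 1) * C)
      (f := fun x => ((∏ i, jacobiTheta₂ (x i) (Complex.I / e)) - 1) * f x)
      (by rw [volume_box]; exact ENNReal.one_lt_top)
      (fun x _ => by
        rw [norm_mul]
        exact mul_le_mul (hθbd x) (hC x) (norm_nonneg _) (by linarith))
    rw [measureReal_def, hvol, mul_one] at h6
    exact h6
  -- Dfun (ε m) → 0
  have hD0 : Tendsto (fun m => Dfun (ε m)) atTop (𝓝 0) := by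
    have hinv : Tendsto (fun m => (ε m)⁻¹) atTop atTop :=
      tendsto_inv_nhdsGT_zero.comp (tendsto_nhdsWithin_of_tendsto_nhds_of_eventually_within ε hε0
        (Filter.Eventually.of_forall fun m => hεpos m))
    have hexp : Tendsto (fun m => rexp (-π * (ε m)⁻¹)) atTop (𝓝 0) := by
      have h1 : Tendsto (fun m => -(π * (ε m)⁻¹)) atTop atBot :=
        tendsto_neg_atTop_atBot.comp (hinv.const_mul_atTop Real.pi_pos)
      have h2 := Real.tendsto_exp_atBot.comp h1
      exact h2.congr fun m => by rw [Function.comp_apply]; ring_nf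
    have hub : ∀ᶠ m in atTop, Dfun (ε m) ≤ (rexp π * rexp (-π * (ε m)⁻¹)) * Dfun 1 := by
      filter_upwards [hε0.eventually_lt_const one_pos] with m hm
      exact Dfun_le (hεpos m) hm.le
    have hmaj : Tendsto (fun m => (rexp π * rexp (-π * (ε m)⁻¹)) * Dfun 1) atTop (𝓝 0) := by
      have := ((hexp.const_mul (rexp π)).mul_const (Dfun 1))
      simpa using this
    exact squeeze_zero' (Filter.Eventually.of_forall fun m => Dfun_nonneg (hεpos m)) hub hmaj
  -- conclude
  rw [tendsto_iff_norm_sub_tendsto_zero]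
  have hB : Tendsto (fun m => ((1 + Dfun (ε m)) ^ n - 1) * C) atTop (𝓝 0) := by
    have := (((hD0.const_add 1).pow n).sub_const 1).mul_const C
    simpa using this
  exact squeeze_zero (fun m => norm_nonneg _) hdiff hB
end

section
/- Let f : ℝⁿ → ℂ be continuous and 1-periodic, and let (g_m) be a sequence of continuous 1-periodic functions on ℝⁿ that is uniformly bounded (∃ M, ∀ m x, |g_m(x)| ≤ M) and converges pointwise to a function g. If (ε_m) is a sequence of positive reals with ε_m → 0, then lim_{m→∞} ε_m^{n/2} ∫_{ℝⁿ} e^{-π ε_m |x|²} f(x) g_m(x) dx = ∫_{[0,1]ⁿ} f(x) g(x) dx. -/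
open MeasureTheory Real Filter

namespace Stmt1


lemma summable_nat_gauss (a x : ℝ) (ha : 0 < a) :
    Summable fun j : ℕ => rexp (-(a * (x + j) ^ 2)) := by
  apply Summable.of_norm_bounded_eventually (g := fun j : ℕ => rexp (-a) ^ j)
    (summable_geometric_of_lt_one (exp_nonneg _) (exp_lt_one_iff.mpr (neg_neg_iff_pos.mpr ha)))
  rw [Nat.cofinite_eq_atTop, eventually_atTop]
  refine ⟨⌈2 * |x| + 1⌉₊, fun j hj => ?_⟩
  have hj' : 2 * |x| + 1 ≤ (j : ℝ) := le_trans (Nat.le_ceil _) (Nat.cast_le.mpr hj)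
  have h1 : (j : ℝ) ≤ (x + j) ^ 2 := by
    have hx : -|x| ≤ x := neg_abs_le x
    nlinarith [abs_nonneg x, sq_nonneg (x + j - (j:ℝ)/2 - 1/2), sq_nonneg ((j:ℝ) - 1)]
  rw [norm_of_nonneg (exp_nonneg _), ← Real.exp_nat_mul]
  apply exp_le_exp.mpr
  nlinarith
lemma summable_int_gauss (a x : ℝ) (ha : 0 < a) :
    Summable fun j : ℤ => rexp (-(a * (x + j) ^ 2)) := by
  apply Summable.of_nat_of_neg (f := fun j : ℤ => rexp (-(a * (x + j) ^ 2)))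
  · exact_mod_cast summable_nat_gauss a x ha
  · have := summable_nat_gauss a (-x) ha
    apply this.congr
    intro j
    push_cast
    ring_nf



noncomputable def θ (e x : ℝ) : ℝ := Real.sqrt e * ∑' j : ℤ, rexp (-(π * e * (x + j) ^ 2))
noncomputable def τ (e : ℝ) : ℝ := ∑' j : ℤ, if j = (0:ℤ) then 0 else rexp (-(π * (j:ℝ) ^ 2 / e))

lemma summable_tau_base (e : ℝ) (he : 0 < e) :
    Summable fun j : ℤ => rexp (-(π * (j:ℝ) ^ 2 / e)) := by
  have := summable_int_gauss (π / e) 0 (div_pos pi_pos he)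
  apply this.congr
  intro j
  ring_nf

lemma summable_tau_term (e : ℝ) (he : 0 < e) :
    Summable fun j : ℤ => if j = (0:ℤ) then 0 else rexp (-(π * (j:ℝ) ^ 2 / e)) := by
  apply Summable.of_nonneg_of_le _ _ (summable_tau_base e he) <;> intro j
  · positivity
  · split <;> simp [exp_nonneg]

lemma tau_nonneg (e : ℝ) : 0 ≤ τ e := by
  apply tsum_nonneg; intro j; positivity

lemma theta_sub_one (e : ℝ) (he : 0 < e) (x : ℝ) : |θ e x - 1| ≤ τ e := by
  have ha : (0:ℝ) < ((e:ℂ)⁻¹).re := by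
    simpa using inv_pos.mpr he
  have hP := Complex.tsum_exp_neg_quadratic (a := (e:ℂ)⁻¹) ha (-(Complex.I * x))
  -- rewrite RHS sum of hP
  have hterm : ∀ j : ℤ, Complex.exp (-(π:ℂ) / ((e:ℂ)⁻¹) * ((j:ℂ) + Complex.I * (-(Complex.I * x))) ^ 2)
      = ((rexp (-(π * e * (x + j) ^ 2)) : ℝ) : ℂ) := by
    intro j
    rw [Complex.ofReal_exp]
    congr 1
    rw [show Complex.I * -(Complex.I * (x:ℂ)) = (x:ℂ) by
      rw [mul_neg, ← mul_assoc, Complex.I_mul_I]; ring]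
    rw [div_inv_eq_mul]
    push_cast
    ring
  have hsqrt : (1:ℂ) / ((e:ℂ)⁻¹) ^ ((1:ℂ)/2) = ((Real.sqrt e : ℝ) : ℂ) := by
    rw [show ((e:ℂ)⁻¹) = (((e⁻¹ : ℝ)) : ℂ) by push_cast; ring]
    rw [show ((1:ℂ)/2) = (((1/2 : ℝ)) : ℂ) by push_cast; ring]
    rw [← Complex.ofReal_cpow (by positivity)]
    rw [← Real.sqrt_eq_rpow, Real.sqrt_inv]
    rw [Complex.ofReal_inv, one_div, inv_inv]
  -- now hP : LHSsum = sqrt e * (sum of our gaussians)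
  have key : ((θ e x : ℝ) : ℂ) = ∑' j : ℤ, Complex.exp (-(π:ℂ) * ((e:ℂ)⁻¹) * (j:ℂ)^2 + 2 * π * (-(Complex.I * x)) * j) := by
    rw [hP, hsqrt, tsum_congr hterm, θ]
    push_cast [Complex.ofReal_tsum]
    ring
  -- norms of terms
  have hnorm : ∀ j : ℤ, ‖Complex.exp (-(π:ℂ) * ((e:ℂ)⁻¹) * (j:ℂ)^2 + 2 * π * (-(Complex.I * x)) * j)‖
      = rexp (-(π * (j:ℝ)^2 / e)) := by
    intro j
    rw [show (-(π:ℂ) * ((e:ℂ)⁻¹) * (j:ℂ)^2 + 2 * π * (-(Complex.I * x)) * (j:ℂ))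
        = ((-(π * (j:ℝ)^2 / e) : ℝ) : ℂ) + ((-(2 * π * x * j) : ℝ):ℂ) * Complex.I by
      push_cast; field_simp]
    rw [Complex.exp_add, norm_mul,
      Complex.norm_exp_ofReal, Complex.norm_exp_ofReal_mul_I, mul_one]
  have hsumnorm : Summable fun j : ℤ => ‖Complex.exp (-(π:ℂ) * ((e:ℂ)⁻¹) * (j:ℂ)^2 + 2 * π * (-(Complex.I * x)) * j)‖ := by
    simp_rw [hnorm]; exact summable_tau_base e he
  have hsum : Summable fun j : ℤ => Complex.exp (-(π:ℂ) * ((e:ℂ)⁻¹) * (j:ℂ)^2 + 2 * π * (-(Complex.I * x)) * j) :=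
    Summable.of_norm hsumnorm
  have h0 : Complex.exp (-(π:ℂ) * ((e:ℂ)⁻¹) * ((0:ℤ):ℂ)^2 + 2 * π * (-(Complex.I * x)) * ((0:ℤ):ℂ)) = 1 := by
    norm_num
  rw [hsum.tsum_eq_add_tsum_ite 0, h0] at key
  have : ((θ e x : ℝ):ℂ) - 1 = ∑' j : ℤ, (if j = (0:ℤ) then 0 else Complex.exp (-(π:ℂ) * ((e:ℂ)⁻¹) * (j:ℂ)^2 + 2 * π * (-(Complex.I * x)) * j)) := by
    rw [key]; ring
  have hh : |θ e x - 1| = ‖((θ e x : ℝ):ℂ) - 1‖ := by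
    rw [show ((θ e x : ℝ):ℂ) - 1 = (((θ e x - 1 : ℝ)):ℂ) by push_cast; ring, Complex.norm_real,
      Real.norm_eq_abs]
  rw [hh, this]
  have hsn2 : Summable fun j : ℤ =>
      ‖(if j = (0:ℤ) then 0 else Complex.exp (-(π:ℂ) * ((e:ℂ)⁻¹) * (j:ℂ)^2 + 2 * π * (-(Complex.I * x)) * j))‖ := by
    apply Summable.of_nonneg_of_le (fun j => norm_nonneg _) _ hsumnorm
    intro j
    split
    · simp
    · exact le_refl _
  refine le_trans (norm_tsum_le_tsum_norm hsn2) ?_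
  rw [τ]
  apply Summable.tsum_le_tsum _ hsn2 (summable_tau_term e he)
  intro j
  split
  · simp
  · exact le_of_eq (hnorm j)


lemma Ctau_summable : Summable fun j : ℤ => rexp (-(π * ((j:ℝ) ^ 2 - 1))) := by
  have h := (summable_int_gauss π 0 pi_pos).mul_left (rexp π)
  apply h.congr
  intro j
  rw [← Real.exp_add]
  congr 1
  ring

noncomputable def Cτ : ℝ := ∑' j : ℤ, rexp (-(π * ((j:ℝ) ^ 2 - 1)))

lemma tau_le (e : ℝ) (he : 0 < e) (he1 : e ≤ 1) : τ e ≤ rexp (-(π / e)) * Cτ := by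
  rw [τ, Cτ, ← tsum_mul_left]
  apply Summable.tsum_le_tsum _ (summable_tau_term e he) (Ctau_summable.mul_left _)
  intro j
  split
  · positivity
  · rename_i hj
    rw [← Real.exp_add]
    apply exp_le_exp.mpr
    have hj2 : (1:ℝ) ≤ (j:ℝ) ^ 2 := by
      have h1 : (1:ℝ) ≤ |(j:ℝ)| := by exact_mod_cast Int.one_le_abs hj
      nlinarith [sq_abs (j:ℝ)]
    have h1e : (1:ℝ) ≤ 1 / e := by rw [le_div_iff₀ he]; linarith
    rw [div_eq_mul_one_div (π * (j:ℝ)^2) e, div_eq_mul_one_div π e]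
    nlinarith [pi_pos, mul_nonneg (mul_nonneg pi_pos.le (sub_nonneg.mpr hj2)) (sub_nonneg.mpr h1e)]

lemma tau_tendsto (ε : ℕ → ℝ) (hεpos : ∀ m, 0 < ε m) (hε0 : Tendsto ε atTop (nhds 0)) :
    Tendsto (fun m => τ (ε m)) atTop (nhds 0) := by
  have hinv : Tendsto (fun m => (ε m)⁻¹) atTop atTop := by
    apply tendsto_inv_nhdsGT_zero.comp
    exact tendsto_nhdsWithin_of_tendsto_nhds_of_eventually_within _ hε0
      (Eventually.of_forall fun m => hεpos m)
  have hdiv : Tendsto (fun m => π / ε m) atTop atTop := by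
    simp_rw [div_eq_mul_inv]
    exact hinv.const_mul_atTop pi_pos
  have hexp : Tendsto (fun m => rexp (-(π / ε m))) atTop (nhds 0) := by
    exact Real.tendsto_exp_atBot.comp (tendsto_neg_atTop_atBot.comp hdiv)
  have hg : Tendsto (fun m => rexp (-(π / ε m)) * Cτ) atTop (nhds 0) := by
    simpa using hexp.mul_const Cτ
  apply squeeze_zero' (Eventually.of_forall fun m => tau_nonneg (ε m)) _ hg
  have : ∀ᶠ m in atTop, ε m ≤ 1 := by
    filter_upwards [hε0.eventually_lt_const (one_pos)] with m hm using hm.le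
  filter_upwards [this] with m hm using tau_le (ε m) (hεpos m) hm

lemma list_prod_close (t : ℝ) (ht : 0 ≤ t) :
    ∀ l : List ℝ, (∀ a ∈ l, |a - 1| ≤ t) → |l.prod - 1| ≤ (1 + t) ^ l.length - 1 := by
  intro l
  induction l with
  | nil => simp
  | cons a l ih =>
    intro h
    have ha : |a - 1| ≤ t := h a List.mem_cons_self
    have hl : |l.prod - 1| ≤ (1 + t) ^ l.length - 1 := ih fun b hb => h b (List.mem_cons_of_mem a hb)
    have hP : |l.prod| ≤ (1 + t) ^ l.length := by
      calc |l.prod| ≤ |l.prod - 1| + 1 := by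
            calc |l.prod| = |(l.prod - 1) + 1| := by congr 1; ring
            _ ≤ |l.prod - 1| + |(1:ℝ)| := abs_add_le _ _
            _ = |l.prod - 1| + 1 := by rw [abs_one]
      _ ≤ (1 + t) ^ l.length := by linarith
    have hpow : (1:ℝ) ≤ (1 + t) ^ l.length := one_le_pow₀ (by linarith)
    rw [List.prod_cons, List.length_cons]
    calc |a * l.prod - 1| = |(a - 1) * l.prod + (l.prod - 1)| := by congr 1; ring
    _ ≤ |(a - 1) * l.prod| + |l.prod - 1| := abs_add_le _ _
    _ = |a - 1| * |l.prod| + |l.prod - 1| := by rw [abs_mul]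
    _ ≤ t * (1 + t) ^ l.length + ((1 + t) ^ l.length - 1) := by
        gcongr
    _ ≤ (1 + t) ^ (l.length + 1) - 1 := by
        rw [pow_succ]
        nlinarith [pow_nonneg (by linarith : (0:ℝ) ≤ 1 + t) l.length]

lemma prod_theta_close {n : ℕ} (e : ℝ) (he : 0 < e) (x : Fin n → ℝ) :
    |∏ i, θ e (x i) - 1| ≤ (1 + τ e) ^ n - 1 := by
  have := list_prod_close (τ e) (tau_nonneg e) (List.ofFn fun i => θ e (x i)) ?_
  · simpa [List.prod_ofFn] using this
  · intro a ha
    rw [List.mem_ofFn] at ha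
    obtain ⟨i, rfl⟩ := ha
    exact theta_sub_one e he (x i)

set_option maxHeartbeats 1000000 in

lemma hasSum_pi_prod : ∀ {n : ℕ} (a : Fin n → ℤ → ℝ), (∀ i j, 0 ≤ a i j) → (∀ i, Summable (a i)) →
    HasSum (fun k : Fin n → ℤ => ∏ i, a i (k i)) (∏ i, ∑' j, a i j) := by
  intro n
  induction n with
  | zero =>
    intro a h0 hs
    have := hasSum_fintype (fun k : Fin 0 → ℤ => ∏ i, a i (k i))
    simpa using this
  | succ n ih =>
    intro a h0 hs
    rw [← Equiv.hasSum_iff (Fin.consEquiv (fun _ : Fin (n+1) => ℤ))]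
    have htail : HasSum (fun k : Fin n → ℤ => ∏ i, a (Fin.succ i) (k i)) (∏ i, ∑' j, a (Fin.succ i) j) :=
      ih _ (fun i j => h0 i.succ j) (fun i => hs i.succ)
    have hsummul : Summable (fun p : ℤ × (Fin n → ℤ) =>
        a 0 p.1 * (fun k : Fin n → ℤ => ∏ i, a (Fin.succ i) (k i)) p.2) := by
      exact Summable.mul_of_nonneg (f := a 0)
        (g := fun k : Fin n → ℤ => ∏ i, a (Fin.succ i) (k i)) (hs 0) htail.summable
        (fun j => h0 0 j) (fun k => Finset.prod_nonneg fun i _ => h0 i.succ (k i))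
    have hmul : HasSum (fun p : ℤ × (Fin n → ℤ) =>
          a 0 p.1 * (fun k : Fin n → ℤ => ∏ i, a (Fin.succ i) (k i)) p.2)
        ((∑' j, a 0 j) * ∏ i, ∑' j, a (Fin.succ i) j) :=
      HasSum.mul (f := a 0) (g := fun k : Fin n → ℤ => ∏ i, a (Fin.succ i) (k i))
        ((hs 0).hasSum) htail hsummul
    have heq : ((fun k : Fin (n+1) → ℤ => ∏ i, a i (k i)) ∘ (Fin.consEquiv (fun _ : Fin (n+1) => ℤ)))
        = fun p : ℤ × (Fin n → ℤ) => a 0 p.1 * (fun k : Fin n → ℤ => ∏ i, a (Fin.succ i) (k i)) p.2 := by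
      funext p
      simp only [Function.comp_apply, Fin.consEquiv_apply]
      rw [Fin.prod_univ_succ]
      simp
    rw [heq]
    have h2 : (∏ i : Fin (n+1), ∑' j, a i j)
        = (∑' j, a 0 j) * ∏ i : Fin n, ∑' j, a (Fin.succ i) j := Fin.prod_univ_succ _
    rw [h2]
    exact hmul



variable {n : ℕ}

def Sk (k : Fin n → ℤ) : Set (Fin n → ℝ) := Set.univ.pi fun i => Set.Ico (k i : ℝ) (k i + 1)

noncomputable def S0 : Set (Fin n → ℝ) := Sk 0

lemma S0_eq : (S0 : Set (Fin n → ℝ)) = Set.univ.pi fun _ => Set.Ico (0:ℝ) 1 := by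
  simp [S0, Sk]

lemma measurableSet_Sk (k : Fin n → ℤ) : MeasurableSet (Sk k) :=
  MeasurableSet.univ_pi fun i => measurableSet_Ico

lemma iUnion_Sk : ⋃ k : Fin n → ℤ, Sk k = Set.univ := by
  ext x
  simp only [Set.mem_iUnion, Set.mem_univ, iff_true, Sk, Set.mem_pi, Set.mem_univ,
    forall_true_left, Set.mem_Ico]
  exact ⟨fun i => ⌊x i⌋, fun i => ⟨Int.floor_le _, by push_cast; exact Int.lt_floor_add_one _⟩⟩

lemma pairwise_Sk : Pairwise (Function.onFun Disjoint (Sk (n := n))) := by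
  intro k k' hkk'
  rcases Function.ne_iff.mp hkk' with ⟨i, hi⟩
  rw [Function.onFun]
  apply Set.disjoint_left.mpr
  intro x hx hx'
  have h1 := hx i (Set.mem_univ i)
  have h2 := hx' i (Set.mem_univ i)
  simp only [Set.mem_Ico] at h1 h2
  apply hi
  have e1 : k i ≤ k' i := by
    have : (k i : ℝ) < (k' i : ℝ) + 1 := lt_of_le_of_lt h1.1 h2.2
    exact_mod_cast Int.lt_add_one_iff.mp (by exact_mod_cast this)
  have e2 : k' i ≤ k i := by
    have : (k' i : ℝ) < (k i : ℝ) + 1 := lt_of_le_of_lt h2.1 h1.2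
    exact_mod_cast Int.lt_add_one_iff.mp (by exact_mod_cast this)
  exact le_antisymm e1 e2

lemma Sk_preimage (k : Fin n → ℤ) :
    (fun x : Fin n → ℝ => x + fun i => (k i : ℝ)) ⁻¹' Sk k = S0 := by
  ext x
  simp only [Set.mem_preimage, Sk, S0_eq, Set.mem_pi, Set.mem_univ, forall_true_left,
    Set.mem_Ico, Pi.add_apply]
  refine forall_congr' fun i => ?_
  constructor
  · rintro ⟨a, b⟩; constructor <;> linarith
  · rintro ⟨a, b⟩; constructor <;> linarith

lemma setIntegral_Sk {X : Type*} [NormedAddCommGroup X] [NormedSpace ℝ X]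
    (F : (Fin n → ℝ) → X) (k : Fin n → ℤ) :
    ∫ x in Sk k, F x = ∫ x in S0, F (x + fun i => (k i : ℝ)) := by
  rw [← Sk_preimage k]
  exact ((measurePreserving_add_right volume (fun i => (k i : ℝ))).setIntegral_preimage_emb
    (MeasurableEquiv.addRight (fun i => (k i : ℝ))).measurableEmbedding F (Sk k)).symm

lemma S0_subset_Icc : (S0 : Set (Fin n → ℝ)) ⊆ Set.Icc 0 1 := by
  intro x hx
  rw [S0_eq] at hx
  constructor <;> intro i <;>
    [exact (hx i (Set.mem_univ i)).1; exact le_of_lt (hx i (Set.mem_univ i)).2]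

noncomputable def Gf (e : ℝ) : (Fin n → ℝ) → ℝ := fun x => rexp (-(π * e * ∑ i, x i ^ 2))

lemma sqrt_pow_eq (e : ℝ) (he : 0 < e) : e ^ ((n : ℝ) / 2) = (Real.sqrt e) ^ n := by
  rw [Real.sqrt_eq_rpow, ← Real.rpow_natCast (e ^ ((1:ℝ)/2)) n, ← Real.rpow_mul he.le]
  congr 1
  ring

lemma Gf_prod (e : ℝ) (x : Fin n → ℝ) : Gf e x = ∏ i, rexp (-(π * e * (x i) ^ 2)) := by
  rw [Gf, ← Real.exp_sum]
  congr 1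
  rw [Finset.mul_sum, ← Finset.sum_neg_distrib]

lemma Gf_cont (e : ℝ) : Continuous (Gf (n := n) e) := by
  apply Real.continuous_exp.comp
  exact (continuous_const.mul (continuous_finset_sum _ fun i _ =>
    (continuous_apply i).pow 2)).neg

lemma Gf_nonneg (e : ℝ) (x : Fin n → ℝ) : 0 ≤ Gf e x := exp_nonneg _

lemma Gf_int (e : ℝ) (he : 0 < e) : Integrable (Gf (n := n) e) := by
  have hpe : 0 < π * e := mul_pos pi_pos he
  have h1 : Integrable (fun x : Fin n → ℝ => ∏ i, rexp (-(π * e * (x i) ^ 2))) := by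
    apply Integrable.fintype_prod (f := fun (_ : Fin n) (t : ℝ) => rexp (-(π * e * t ^ 2)))
    intro i
    have h2 := integrable_exp_neg_mul_sq hpe
    apply h2.congr
    filter_upwards with t
    congr 1
    ring
  apply h1.congr
  filter_upwards with x
  rw [Gf_prod e x]

lemma Gf_shift (e : ℝ) (x : Fin n → ℝ) (k : Fin n → ℤ) :
    Gf e (x + fun i => (k i : ℝ)) = ∏ i, rexp (-(π * e * (x i + k i) ^ 2)) := by
  rw [Gf_prod]
  rfl

set_option maxHeartbeats 1000000 in
lemma key (e : ℝ) (he : 0 < e) (h : (Fin n → ℝ) → ℂ) (hc : Continuous h)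
    (hp : ∀ (x : Fin n → ℝ) (k : Fin n → ℤ), h (x + fun i => (k i : ℝ)) = h x)
    (C : ℝ) (hC : ∀ x, ‖h x‖ ≤ C) :
    ((e ^ ((n : ℝ) / 2) : ℝ) : ℂ) * ∫ x : Fin n → ℝ, ((Gf e x : ℝ) : ℂ) * h x
      = ∫ x in S0, (((∏ i, θ e (x i) : ℝ)) : ℂ) * h x := by
  have hpe : 0 < π * e := mul_pos pi_pos he
  have hsummable1 : ∀ t : ℝ, Summable fun j : ℤ => rexp (-(π * e * (t + j) ^ 2)) :=
    fun t => summable_int_gauss (π * e) t hpe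
  have hP : ∀ x : Fin n → ℝ, HasSum (fun k : Fin n → ℤ => ∏ i, rexp (-(π * e * (x i + k i) ^ 2)))
      (∏ i, ∑' j : ℤ, rexp (-(π * e * (x i + j) ^ 2))) := fun x =>
    hasSum_pi_prod (fun i j => rexp (-(π * e * (x i + j) ^ 2)))
      (fun i j => exp_nonneg _) (fun i => hsummable1 (x i))
  have hFcont : Continuous (fun x : Fin n → ℝ => ((Gf e x : ℝ) : ℂ) * h x) :=
    (Complex.continuous_ofReal.comp (Gf_cont e)).mul hc
  have hFint : Integrable (fun x : Fin n → ℝ => ((Gf e x : ℝ) : ℂ) * h x) := by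
    apply Integrable.mono' ((Gf_int e he).mul_const C) hFcont.aestronglyMeasurable
    filter_upwards with x
    simp only [norm_mul, Complex.norm_real, Real.norm_eq_abs, abs_of_nonneg (Gf_nonneg e x)]
    exact mul_le_mul_of_nonneg_left (hC x) (Gf_nonneg e x)
  -- Step A : unfold to sum over cubes
  have hsumF : HasSum (fun k : Fin n → ℤ => ∫ x in Sk k, ((Gf e x : ℝ) : ℂ) * h x)
      (∫ x, ((Gf e x : ℝ) : ℂ) * h x) := by
    have h3 := hasSum_integral_iUnion (f := fun x : Fin n → ℝ => ((Gf e x : ℝ) : ℂ) * h x)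
      measurableSet_Sk pairwise_Sk (by rw [iUnion_Sk]; exact hFint.integrableOn)
    rwa [iUnion_Sk, Measure.restrict_univ] at h3
  have hterm : ∀ k : Fin n → ℤ, ∫ x in Sk k, ((Gf e x : ℝ) : ℂ) * h x
      = ∫ x in S0, ((Gf e (x + fun i => (k i : ℝ)) : ℝ) : ℂ) * h x := by
    intro k
    rw [setIntegral_Sk (fun x => ((Gf e x : ℝ) : ℂ) * h x) k]
    apply setIntegral_congr_fun (measurableSet_Sk 0)
    intro x _
    simp only
    rw [hp x k]
  have hstepA : (∫ x, ((Gf e x : ℝ) : ℂ) * h x)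
      = ∑' k : Fin n → ℤ, ∫ x in S0, ((Gf e (x + fun i => (k i : ℝ)) : ℝ) : ℂ) * h x := by
    rw [← hsumF.tsum_eq]
    exact tsum_congr hterm
  -- G-version of step A (for summability)
  have hsumG : HasSum (fun k : Fin n → ℤ => ∫ x in S0, Gf e (x + fun i => (k i : ℝ)))
      (∫ x : Fin n → ℝ, Gf e x) := by
    have hGint' : IntegrableOn (Gf e) (⋃ k : Fin n → ℤ, Sk k) volume := by
      rw [iUnion_Sk]; exact (Gf_int e he).integrableOn
    have h3 := hasSum_integral_iUnion measurableSet_Sk pairwise_Sk hGint'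
    rw [iUnion_Sk, Measure.restrict_univ] at h3
    have h4 : ∀ k : Fin n → ℤ, ∫ x in Sk k, Gf e x = ∫ x in S0, Gf e (x + fun i => (k i : ℝ)) :=
      fun k => setIntegral_Sk (Gf e) k
    have h5 : (fun k : Fin n → ℤ => ∫ x in Sk k, Gf e x)
        = fun k : Fin n → ℤ => ∫ x in S0, Gf e (x + fun i => (k i : ℝ)) := funext h4
    rw [← h5]
    exact h3
  -- integrability on S0
  have hIntk : ∀ k : Fin n → ℤ,
      IntegrableOn (fun x => ((Gf e (x + fun i => (k i : ℝ)) : ℝ) : ℂ) * h x) S0 := by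
    intro k
    have hcont : Continuous fun x : Fin n → ℝ => ((Gf e (x + fun i => (k i : ℝ)) : ℝ) : ℂ) * h x :=
      (Complex.continuous_ofReal.comp ((Gf_cont e).comp (continuous_id.add continuous_const))).mul hc
    exact (hcont.continuousOn.integrableOn_compact isCompact_Icc).mono_set S0_subset_Icc
  have hIntGk : ∀ k : Fin n → ℤ,
      IntegrableOn (fun x : Fin n → ℝ => Gf e (x + fun i => (k i : ℝ))) S0 := by
    intro k
    have hcont : Continuous fun x : Fin n → ℝ => Gf e (x + fun i => (k i : ℝ)) :=
      (Gf_cont e).comp (continuous_id.add continuous_const)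
    exact (hcont.continuousOn.integrableOn_compact isCompact_Icc).mono_set S0_subset_Icc
  -- Step B : swap sum and integral
  have hsummnorm : Summable (fun k : Fin n → ℤ =>
      ∫ x in S0, ‖((Gf e (x + fun i => (k i : ℝ)) : ℝ) : ℂ) * h x‖) := by
    apply Summable.of_nonneg_of_le (fun k => integral_nonneg fun x => norm_nonneg _) ?_
      (hsumG.summable.mul_right C)
    intro k
    rw [← integral_mul_const]
    apply integral_mono ((hIntk k).norm) ((hIntGk k).mul_const C)
    intro x
    simp only [norm_mul, Complex.norm_real, Real.norm_eq_abs, abs_of_nonneg (Gf_nonneg e _)]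
    exact mul_le_mul_of_nonneg_left (hC x) (Gf_nonneg e _)
  have hstepB : (∑' k : Fin n → ℤ, ∫ x in S0, ((Gf e (x + fun i => (k i : ℝ)) : ℝ) : ℂ) * h x)
      = ∫ x in S0, ∑' k : Fin n → ℤ, ((Gf e (x + fun i => (k i : ℝ)) : ℝ) : ℂ) * h x :=
    integral_tsum_of_summable_integral_norm hIntk hsummnorm
  -- Step C : pointwise tsum identity
  have hstepC : ∀ x : Fin n → ℝ,
      (∑' k : Fin n → ℤ, ((Gf e (x + fun i => (k i : ℝ)) : ℝ) : ℂ) * h x)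
      = (((∏ i, ∑' j : ℤ, rexp (-(π * e * (x i + j) ^ 2)) : ℝ)) : ℂ) * h x := by
    intro x
    rw [tsum_mul_right]
    congr 1
    rw [← (hP x).tsum_eq, ← Complex.ofReal_tsum]
    congr 1
    exact tsum_congr fun k => Gf_shift e x k
  -- combine A, B, C
  have hmain : (∫ x, ((Gf e x : ℝ) : ℂ) * h x)
      = ∫ x in S0, (((∏ i, ∑' j : ℤ, rexp (-(π * e * (x i + j) ^ 2)) : ℝ)) : ℂ) * h x := by
    rw [hstepA, hstepB]
    apply integral_congr_ae
    filter_upwards with x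
    exact hstepC x
  -- Step D : multiply by the scalar
  have hcP : ∀ x : Fin n → ℝ,
      e ^ ((n : ℝ) / 2) * ∏ i, ∑' j : ℤ, rexp (-(π * e * (x i + j) ^ 2)) = ∏ i, θ e (x i) := by
    intro x
    rw [sqrt_pow_eq e he]
    rw [show (∏ i, θ e (x i)) = (∏ _i : Fin n, Real.sqrt e) *
        ∏ i, ∑' j : ℤ, rexp (-(π * e * (x i + j) ^ 2)) by
      rw [← Finset.prod_mul_distrib]; rfl]
    rw [Finset.prod_const, Finset.card_univ, Fintype.card_fin]
  calc ((e ^ ((n : ℝ) / 2) : ℝ) : ℂ) * ∫ x, ((Gf e x : ℝ) : ℂ) * h x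
      = ∫ x in S0, ((e ^ ((n : ℝ) / 2) : ℝ) : ℂ) *
          ((((∏ i, ∑' j : ℤ, rexp (-(π * e * (x i + j) ^ 2)) : ℝ)) : ℂ) * h x) := by
        rw [hmain, integral_const_mul]
    _ = ∫ x in S0, (((∏ i, θ e (x i) : ℝ)) : ℂ) * h x := by
        apply integral_congr_ae
        filter_upwards with x
        rw [← mul_assoc, ← Complex.ofReal_mul, hcP x]


lemma measurableSet_S0 : MeasurableSet (S0 : Set (Fin n → ℝ)) := measurableSet_Sk 0

lemma volume_S0 : volume (S0 : Set (Fin n → ℝ)) = 1 := by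
  rw [S0_eq, volume_pi_pi]
  simp [Real.volume_Ico]

lemma S0_ae_eq : (S0 : Set (Fin n → ℝ)) =ᵐ[volume] Set.Icc 0 1 := by
  have h1 : volume (Set.Icc (0 : Fin n → ℝ) 1) = 1 := by
    rw [← Set.pi_univ_Icc, volume_pi_pi]
    simp [Real.volume_Icc]
  exact ae_eq_of_subset_of_measure_ge S0_subset_Icc (le_of_eq (by rw [h1, volume_S0]))
    measurableSet_S0.nullMeasurableSet (by rw [h1]; exact ENNReal.one_ne_top)

lemma measurable_theta (e : ℝ) (he : 0 < e) : Measurable (θ e) := by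
  have heq : θ e = fun t => Real.sqrt e *
      (∑' j : ℤ, ENNReal.ofReal (rexp (-(π * e * (t + j) ^ 2)))).toReal := by
    funext t
    rw [θ]
    congr 1
    rw [← ENNReal.ofReal_tsum_of_nonneg (fun j => exp_nonneg _)
      (summable_int_gauss (π * e) t (mul_pos pi_pos he)), ENNReal.toReal_ofReal
      (tsum_nonneg fun j => exp_nonneg _)]
  rw [heq]
  apply Measurable.const_mul
  apply ENNReal.measurable_toReal.comp
  apply Measurable.ennreal_tsum
  intro j
  apply ENNReal.measurable_ofReal.comp
  apply Continuous.measurable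
  apply Real.continuous_exp.comp
  apply Continuous.neg
  apply continuous_const.mul
  exact ((continuous_id.add continuous_const).pow 2)

lemma bound_periodic (f : (Fin n → ℝ) → ℂ) (hf : Continuous f)
    (hper : ∀ (x : Fin n → ℝ) (k : Fin n → ℤ), f (x + fun i => (k i : ℝ)) = f x) :
    ∃ C : ℝ, 0 ≤ C ∧ ∀ x, ‖f x‖ ≤ C := by
  obtain ⟨C, hC⟩ := (isCompact_Icc (a := (0 : Fin n → ℝ)) (b := 1)).exists_bound_of_continuousOn
    hf.continuousOn
  refine ⟨max C 0, le_max_right _ _, fun x => ?_⟩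
  have hxy : x = (fun i => Int.fract (x i)) + fun i => ((⌊x i⌋ : ℤ) : ℝ) := by
    funext i
    simp [Int.fract_add_floor]
  have hfx : f x = f fun i => Int.fract (x i) := by
    conv_lhs => rw [hxy]
    exact hper _ _
  rw [hfx]
  refine le_trans (hC _ ⟨fun i => Int.fract_nonneg (x i), fun i => (Int.fract_lt_one (x i)).le⟩)
    (le_max_left _ _)

end Stmt1

open Stmt1 in
set_option maxHeartbeats 1000000 in
/-- Gaussian averaging lemma with a uniformly bounded pointwise-convergent sequence
of continuous 1-periodic functions `g_m → g`. -/
theorem stmt1 {n : ℕ} (f : (Fin n → ℝ) → ℂ) (hf : Continuous f)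
    (hper : ∀ (x : Fin n → ℝ) (k : Fin n → ℤ), f (x + fun i => (k i : ℝ)) = f x)
    (g : ℕ → (Fin n → ℝ) → ℂ) (hgcont : ∀ m, Continuous (g m))
    (hgper : ∀ m (x : Fin n → ℝ) (k : Fin n → ℤ), g m (x + fun i => (k i : ℝ)) = g m x)
    (hgbd : ∃ M : ℝ, ∀ m x, ‖g m x‖ ≤ M)
    (glim : (Fin n → ℝ) → ℂ)
    (hglim : ∀ x, Tendsto (fun m => g m x) atTop (nhds (glim x)))
    (ε : ℕ → ℝ) (hεpos : ∀ m, 0 < ε m) (hε0 : Tendsto ε atTop (nhds (0 : ℝ))) :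
    Tendsto (fun m : ℕ =>
        ((ε m ^ ((n : ℝ) / 2) : ℝ) : ℂ) *
          ∫ x : Fin n → ℝ, ((Real.exp (-(π * ε m * ∑ i, x i ^ 2)) : ℝ) : ℂ) * f x * g m x)
      atTop (nhds (∫ x in Set.Icc (0 : Fin n → ℝ) 1, f x * glim x)) := by
  classical
  obtain ⟨M, hM⟩ := hgbd
  obtain ⟨Cf, hCf0, hCf⟩ := bound_periodic f hf hper
  have hM0 : (0:ℝ) ≤ M := le_trans (norm_nonneg _) (hM 0 0)
  have hCb : ∀ m x, ‖f x * g m x‖ ≤ Cf * M := fun m x => by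
    rw [norm_mul]
    exact mul_le_mul (hCf x) (hM m x) (norm_nonneg _) hCf0
  have hCM0 : (0:ℝ) ≤ Cf * M := mul_nonneg hCf0 hM0
  have hmper : ∀ m (x : Fin n → ℝ) (k : Fin n → ℤ),
      f (x + fun i => (k i : ℝ)) * g m (x + fun i => (k i : ℝ)) = f x * g m x := by
    intro m x k
    rw [hper x k, hgper m x k]
  -- rewrite via the key unfolding lemma
  have hrw : (fun m : ℕ => ((ε m ^ ((n : ℝ) / 2) : ℝ) : ℂ) *
      ∫ x : Fin n → ℝ, ((Real.exp (-(π * ε m * ∑ i, x i ^ 2)) : ℝ) : ℂ) * f x * g m x)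
      = fun m : ℕ => ∫ x in S0, (((∏ i, θ (ε m) (x i) : ℝ)) : ℂ) * (f x * g m x) := by
    funext m
    rw [← key (ε m) (hεpos m) (fun x => f x * g m x) (hf.mul (hgcont m)) (hmper m)
      (Cf * M) (hCb m)]
    congr 1
    apply integral_congr_ae
    filter_upwards with x
    show ((Real.exp (-(π * ε m * ∑ i, x i ^ 2)) : ℝ) : ℂ) * f x * g m x
      = ((Gf (ε m) x : ℝ) : ℂ) * (f x * g m x)
    rw [Gf, mul_assoc]
  rw [hrw, show (∫ x in Set.Icc (0 : Fin n → ℝ) 1, f x * glim x)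
      = ∫ x in S0, f x * glim x from (setIntegral_congr_set S0_ae_eq).symm]
  obtain ⟨T, hT⟩ : ∃ T : ℂ, T = ∫ x in S0, f x * glim x := ⟨_, rfl⟩
  rw [← hT, ← tendsto_sub_nhds_zero_iff]
  have hvolS0 : volume (S0 : Set (Fin n → ℝ)) < ⊤ := by
    rw [volume_S0]; exact ENNReal.one_lt_top
  have hImh : ∀ m, IntegrableOn (fun x : Fin n → ℝ => f x * g m x) S0 := fun m =>
    ((hf.mul (hgcont m)).continuousOn.integrableOn_compact isCompact_Icc).mono_set S0_subset_Icc
  have hKmeas : ∀ m, Measurable fun x : Fin n → ℝ => ∏ i, θ (ε m) (x i) := fun m =>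
    Finset.measurable_prod _ fun i _ =>
      (measurable_theta (ε m) (hεpos m)).comp (measurable_pi_apply i)
  have hKb : ∀ m (x : Fin n → ℝ), |∏ i, θ (ε m) (x i) - 1| ≤ (1 + τ (ε m)) ^ n - 1 :=
    fun m x => prod_theta_close (ε m) (hεpos m) x
  have hKpow0 : ∀ m, (0:ℝ) ≤ (1 + τ (ε m)) ^ n - 1 := by
    intro m
    have := one_le_pow₀ (a := 1 + τ (ε m)) (by linarith [tau_nonneg (ε m)]) (n := n)
    linarith
  have hKabs : ∀ m (x : Fin n → ℝ), |∏ i, θ (ε m) (x i)| ≤ (1 + τ (ε m)) ^ n := by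
    intro m x
    calc |∏ i, θ (ε m) (x i)| = |(∏ i, θ (ε m) (x i) - 1) + 1| := by congr 1; ring
    _ ≤ |∏ i, θ (ε m) (x i) - 1| + |(1:ℝ)| := abs_add_le _ _
    _ ≤ ((1 + τ (ε m)) ^ n - 1) + 1 := by rw [abs_one]; exact add_le_add (hKb m x) le_rfl
    _ = (1 + τ (ε m)) ^ n := by ring
  have hIKh : ∀ m, IntegrableOn
      (fun x : Fin n → ℝ => (((∏ i, θ (ε m) (x i) : ℝ)) : ℂ) * (f x * g m x)) S0 := by
    intro m
    apply Integrable.mono' (g := fun _ : Fin n → ℝ => (1 + τ (ε m)) ^ n * (Cf * M))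
      (integrableOn_const hvolS0.ne)
    · exact ((Complex.measurable_ofReal.comp (hKmeas m)).mul
        (hf.mul (hgcont m)).measurable).aestronglyMeasurable
    · filter_upwards with x
      rw [norm_mul, Complex.norm_real, Real.norm_eq_abs]
      exact mul_le_mul (hKabs m x) (hCb m x) (norm_nonneg _)
        (pow_nonneg (by linarith [tau_nonneg (ε m)]) n)
  -- per-m bound
  have hbd : ∀ m, ‖(∫ x in S0, (((∏ i, θ (ε m) (x i) : ℝ)) : ℂ) * (f x * g m x)) - T‖
      ≤ ((1 + τ (ε m)) ^ n - 1) * (Cf * M) + ‖(∫ x in S0, f x * g m x) - T‖ := by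
    intro m
    have hsplit : (∫ x in S0, (((∏ i, θ (ε m) (x i) : ℝ)) : ℂ) * (f x * g m x)) - T
        = ((∫ x in S0, (((∏ i, θ (ε m) (x i) : ℝ)) : ℂ) * (f x * g m x))
            - ∫ x in S0, f x * g m x) + ((∫ x in S0, f x * g m x) - T) := by ring
    rw [hsplit]
    refine le_trans (norm_add_le _ _) (add_le_add ?_ le_rfl)
    have hdiff : (∫ x in S0, (((∏ i, θ (ε m) (x i) : ℝ)) : ℂ) * (f x * g m x))
        - (∫ x in S0, f x * g m x)
        = ∫ x in S0, ((((∏ i, θ (ε m) (x i) : ℝ)) : ℂ) - 1) * (f x * g m x) := by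
      rw [← integral_sub (hIKh m) (hImh m)]
      apply integral_congr_ae
      filter_upwards with x
      ring
    rw [hdiff]
    have hest := norm_setIntegral_le_of_norm_le_const (μ := volume) (s := (S0 : Set (Fin n → ℝ)))
      (f := fun x : Fin n → ℝ => ((((∏ i, θ (ε m) (x i) : ℝ)) : ℂ) - 1) * (f x * g m x))
      (C := ((1 + τ (ε m)) ^ n - 1) * (Cf * M)) hvolS0 ?_
    · calc ‖∫ x in S0, ((((∏ i, θ (ε m) (x i) : ℝ)) : ℂ) - 1) * (f x * g m x)‖
          ≤ ((1 + τ (ε m)) ^ n - 1) * (Cf * M) * (volume (S0 : Set (Fin n → ℝ))).toReal := hest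
      _ = ((1 + τ (ε m)) ^ n - 1) * (Cf * M) := by
          rw [volume_S0, ENNReal.toReal_one, mul_one]
    · intro x _
      rw [norm_mul, show (((∏ i, θ (ε m) (x i) : ℝ)) : ℂ) - 1
          = (((∏ i, θ (ε m) (x i)) - 1 : ℝ) : ℂ) by push_cast; ring,
        Complex.norm_real, Real.norm_eq_abs]
      exact mul_le_mul (hKb m x) (hCb m x) (norm_nonneg _) (hKpow0 m)
  -- the bound sequence tends to 0
  apply squeeze_zero_norm hbd
  have h1 : Tendsto (fun m => ((1 + τ (ε m)) ^ n - 1) * (Cf * M)) atTop (nhds 0) := by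
    have ht := tau_tendsto ε hεpos hε0
    have h3 : Tendsto (fun m => (1 + τ (ε m)) ^ n - 1) atTop (nhds ((1 + 0:ℝ) ^ n - 1)) :=
      ((tendsto_const_nhds.add ht).pow n).sub tendsto_const_nhds
    have h4 := h3.mul_const (Cf * M)
    simpa using h4
  have h2 : Tendsto (fun m => ∫ x in S0, f x * g m x) atTop (nhds T) := by
    rw [hT]
    apply tendsto_integral_of_dominated_convergence (fun _ => Cf * M)
    · intro m
      exact (hf.mul (hgcont m)).aestronglyMeasurable
    · exact integrableOn_const hvolS0.ne
    · intro m
      filter_upwards with x using hCb m x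
    · filter_upwards with x using tendsto_const_nhds.mul (hglim x)
  have h2' : Tendsto (fun m => ‖(∫ x in S0, f x * g m x) - T‖) atTop (nhds 0) :=
    tendsto_iff_norm_sub_tendsto_zero.mp h2
  simpa using h1.add h2'
end

section
/- If a : ℝⁿ → ℂ satisfies |∂^α a(ξ)| ≤ C_α ⟨ξ⟩^{m − ρ|α|} for all multi-indices α with |α| ≤ N, where ⟨ξ⟩ = (1+|ξ|²)^{1/2}, 0 ≤ ρ ≤ 1, then its restriction ã = a|_{ℤⁿ} satisfies the discrete symbol estimates |Δ^α ã(ξ)| ≤ C'_α ⟨ξ⟩^{m − ρ|α|} for all |α| ≤ N and ξ ∈ ℤⁿ, where C'_α depends only on C_α, n, α, m, ρ. -/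
/-- Partial derivative in the `j`-th coordinate direction. -/
noncomputable def pd {n : ℕ} (j : Fin n) (f : (Fin n → ℝ) → ℂ) : (Fin n → ℝ) → ℂ :=
  fun x => fderiv ℝ f x (Pi.single j 1)

/-- Iterated multi-index partial derivative `∂^α`. -/
noncomputable def mpd {n : ℕ} (α : Fin n → ℕ) (f : (Fin n → ℝ) → ℂ) : (Fin n → ℝ) → ℂ :=
  ((List.finRange n).map fun j => (pd j)^[α j]).foldr (fun g acc => g ∘ acc) id f

/-- Forward difference in the `j`-th lattice direction. -/
def fdiff {n : ℕ} (j : Fin n) (σ : (Fin n → ℤ) → ℂ) : (Fin n → ℤ) → ℂ :=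
  fun ξ => σ (ξ + Pi.single j 1) - σ ξ

/-- Iterated multi-index forward difference `Δ^α`. -/
def mdiff {n : ℕ} (α : Fin n → ℕ) (σ : (Fin n → ℤ) → ℂ) : (Fin n → ℤ) → ℂ :=
  ((List.finRange n).map fun j => (fdiff j)^[α j]).foldr (fun g acc => g ∘ acc) id σ

section Aux

variable {n : ℕ}

/-- Continuous forward difference. -/
noncomputable def cdiff (j : Fin n) (f : (Fin n → ℝ) → ℂ) : (Fin n → ℝ) → ℂ :=
  fun x => f (x + Pi.single j 1) - f x

/-- Restriction to the lattice. -/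
noncomputable def restr (f : (Fin n → ℝ) → ℂ) : (Fin n → ℤ) → ℂ :=
  fun ξ => f fun i => (ξ i : ℝ)

lemma contDiff_cdiff {k : ℕ∞} {f : (Fin n → ℝ) → ℂ} (hf : ContDiff ℝ k f) (j : Fin n) :
    ContDiff ℝ k (cdiff j f) :=
  (hf.comp (contDiff_id.add contDiff_const)).sub hf

lemma contDiff_pd {k : ℕ} {f : (Fin n → ℝ) → ℂ} (hf : ContDiff ℝ ((k + 1 : ℕ) : ℕ∞) f)
    (j : Fin n) : ContDiff ℝ (k : ℕ∞) (pd j f) := by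
  have h : ContDiff ℝ (k : ℕ∞) (fderiv ℝ f) := by
    refine hf.fderiv_right ?_
    exact_mod_cast le_rfl
  exact h.clm_apply contDiff_const

lemma contDiff_pfold : ∀ (L : List (Fin n)) {k : ℕ} {f : (Fin n → ℝ) → ℂ},
    ContDiff ℝ ((k + L.length : ℕ) : ℕ∞) f → ContDiff ℝ (k : ℕ∞) (L.foldr pd f) := by
  intro L
  induction L with
  | nil => intro k f hf; simpa using hf
  | cons j L ih =>
    intro k f hf
    have harith : ((k + 1) + L.length : ℕ) = (k + (j :: L).length : ℕ) := by
      simp; omega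
    have hf' : ContDiff ℝ (((k + 1) + L.length : ℕ) : ℕ∞) f := by
      rw [harith]; exact hf
    have h1 : ContDiff ℝ ((k + 1 : ℕ) : ℕ∞) (L.foldr pd f) := ih hf'
    exact contDiff_pd h1 j

lemma pd_cdiff {f : (Fin n → ℝ) → ℂ} (hf : Differentiable ℝ f) (j k : Fin n) :
    pd j (cdiff k f) = cdiff k (pd j f) := by
  funext x
  have h1 : HasFDerivAt (fun y => f (y + Pi.single k 1))
      (fderiv ℝ f (x + Pi.single k 1)) x := by
    have := (hf (x + Pi.single k 1)).hasFDerivAt.comp x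
      ((hasFDerivAt_id x).add_const (Pi.single k (1 : ℝ)))
    exact this
  have h2 := (hf x).hasFDerivAt
  have h3 := (h1.sub h2).fderiv
  show fderiv ℝ (fun y => f (y + Pi.single k 1) - f y) x (Pi.single j 1) = _
  rw [show (fun y => f (y + Pi.single k 1) - f y) = (fun y => f (y + Pi.single k 1)) - f from rfl, h3]
  simp [cdiff, pd]

lemma cdiff_comm (f : (Fin n → ℝ) → ℂ) (j k : Fin n) :
    cdiff j (cdiff k f) = cdiff k (cdiff j f) := by
  funext x
  simp only [cdiff]
  rw [add_right_comm x (Pi.single k 1) (Pi.single j 1)]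
  ring

lemma cdiff_foldr (L : List (Fin n)) (f : (Fin n → ℝ) → ℂ) (j : Fin n) :
    cdiff j (L.foldr cdiff f) = L.foldr cdiff (cdiff j f) := by
  induction L with
  | nil => rfl
  | cons k L ih =>
    simp only [List.foldr_cons]
    rw [cdiff_comm, ih]

lemma pfold_cdiff : ∀ (L : List (Fin n)) {f : (Fin n → ℝ) → ℂ},
    ContDiff ℝ ((L.length : ℕ) : ℕ∞) f → ∀ j : Fin n,
    L.foldr pd (cdiff j f) = cdiff j (L.foldr pd f) := by
  intro L
  induction L with
  | nil => intro f _ j; rfl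
  | cons k L ih =>
    intro f hf j
    have hf' : ContDiff ℝ ((L.length : ℕ) : ℕ∞) f := by
      refine hf.of_le ?_
      exact_mod_cast Nat.le_succ _
    have hdiff : Differentiable ℝ (L.foldr pd f) := by
      have : ContDiff ℝ ((1 : ℕ) : ℕ∞) (L.foldr pd f) := by
        refine contDiff_pfold L ?_
        convert hf using 2
        simp [Nat.add_comm]
      exact this.differentiable (by norm_num)
    simp only [List.foldr_cons]
    rw [ih hf' j, pd_cdiff hdiff k j]

lemma mvt_step {F : (Fin n → ℝ) → ℂ} (hF : ContDiff ℝ ((1 : ℕ) : ℕ∞) F) (j : Fin n)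
    (x : Fin n → ℝ) :
    ∃ t ∈ Set.Icc (0 : ℝ) 1, ‖cdiff j F x‖ ≤ ‖pd j F (x + t • (Pi.single j 1 : Fin n → ℝ))‖ := by
  set w : Fin n → ℝ := Pi.single j 1 with hw
  set g : ℝ → ℂ := fun t => F (x + t • w) with hg
  have hder : ∀ t : ℝ, HasDerivAt g (pd j F (x + t • w)) t := by
    intro t
    have h1 : HasDerivAt (fun t : ℝ => x + t • w) w t := by
      simpa using ((hasDerivAt_id t).smul_const w).const_add x
    have h2 := (hF.differentiable (by norm_num) (x + t • w)).hasFDerivAt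
    exact h2.comp_hasDerivAt t h1
  have hc : Continuous fun t : ℝ => pd j F (x + t • w) := by
    have h1 : Continuous (fderiv ℝ F) := hF.continuous_fderiv (by norm_num)
    have h2 : Continuous fun t : ℝ => fderiv ℝ F (x + t • w) :=
      h1.comp (continuous_const.add (continuous_id.smul continuous_const))
    exact h2.clm_apply continuous_const
  obtain ⟨t₀, ht₀, hmax⟩ := isCompact_Icc.exists_isMaxOn (Set.nonempty_Icc.2 zero_le_one)
    (hc.norm.continuousOn (s := Set.Icc (0:ℝ) 1))
  refine ⟨t₀, ht₀, ?_⟩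
  have key := norm_image_sub_le_of_norm_deriv_le_segment'
    (f := g) (f' := fun t => pd j F (x + t • w)) (a := 0) (b := 1)
    (C := ‖pd j F (x + t₀ • w)‖)
    (fun t ht => (hder t).hasDerivWithinAt)
    (fun t ht => hmax (Set.Ico_subset_Icc_self ht)) 1 (Set.right_mem_Icc.2 zero_le_one)
  have hg1 : g 1 = F (x + w) := by simp [hg]
  have hg0 : g 0 = F x := by simp [hg]
  rw [hg1, hg0] at key
  simpa [cdiff, hw] using key

lemma keyE : ∀ (L : List (Fin n)) (f : (Fin n → ℝ) → ℂ),
    ContDiff ℝ ((L.length : ℕ) : ℕ∞) f → ∀ x : Fin n → ℝ,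
    ∃ v : Fin n → ℝ, (∀ i, 0 ≤ v i ∧ v i ≤ (L.length : ℝ)) ∧
      ‖L.foldr cdiff f x‖ ≤ ‖L.foldr pd f (x + v)‖ := by
  intro L
  induction L with
  | nil =>
    intro f _ x
    exact ⟨0, fun i => by simp, by simp⟩
  | cons j L ih =>
    intro f hf x
    have hf0 : ContDiff ℝ ((L.length : ℕ) : ℕ∞) f := by
      refine hf.of_le ?_
      exact_mod_cast Nat.le_succ _
    have hf' : ContDiff ℝ ((L.length : ℕ) : ℕ∞) (cdiff j f) := contDiff_cdiff hf0 j
    obtain ⟨v, hv, hle⟩ := ih (cdiff j f) hf' x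
    have hsm : ContDiff ℝ ((1 : ℕ) : ℕ∞) (L.foldr pd f) := by
      refine contDiff_pfold L ?_
      convert hf using 2
      simp [Nat.add_comm]
    obtain ⟨t, ht, hle2⟩ := mvt_step hsm j (x + v)
    refine ⟨v + t • (Pi.single j 1 : Fin n → ℝ), ?_, ?_⟩
    · intro i
      have hvi := hv i
      have hwi : (t • (Pi.single j 1 : Fin n → ℝ)) i = t * (if i = j then 1 else 0) := by
        simp [Pi.single_apply]
      constructor
      · have : 0 ≤ t * (if i = j then 1 else 0) := by
          rcases ht with ⟨ht0, ht1⟩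
          split <;> simp_all
        simp only [Pi.add_apply, hwi]
        linarith [hvi.1]
      · have : t * (if i = j then 1 else 0) ≤ 1 := by
          rcases ht with ⟨ht0, ht1⟩
          split <;> simp_all
        simp only [Pi.add_apply, hwi, List.length_cons]
        push_cast
        linarith [hvi.2]
    · calc ‖(j :: L).foldr cdiff f x‖ = ‖L.foldr cdiff (cdiff j f) x‖ := by
            rw [List.foldr_cons, cdiff_foldr]
        _ ≤ ‖L.foldr pd (cdiff j f) (x + v)‖ := hle
        _ = ‖cdiff j (L.foldr pd f) (x + v)‖ := by rw [pfold_cdiff L hf0 j]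
        _ ≤ ‖pd j (L.foldr pd f) ((x + v) + t • (Pi.single j 1 : Fin n → ℝ))‖ := hle2
        _ = ‖(j :: L).foldr pd f (x + (v + t • (Pi.single j 1 : Fin n → ℝ)))‖ := by
            rw [List.foldr_cons, add_assoc]

lemma iterate_eq_foldr {X : Type*} (op : Fin n → X → X) (j : Fin n) (k : ℕ) (y : X) :
    (op j)^[k] y = (List.replicate k j).foldr op y := by
  induction k with
  | zero => rfl
  | succ k ih => rw [Function.iterate_succ_apply', List.replicate_succ, List.foldr_cons, ih]

lemma foldr_map_iterate {X : Type*} (op : Fin n → X → X) (α : Fin n → ℕ) (f : X) :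
    ∀ L : List (Fin n),
      ((L.map fun j => (op j)^[α j]).foldr (fun g acc => g ∘ acc) id) f
        = (L.flatMap fun j => List.replicate (α j) j).foldr op f := by
  intro L
  induction L with
  | nil => rfl
  | cons j L ih =>
    simp only [List.map_cons, List.foldr_cons, Function.comp_apply, List.flatMap_cons,
      List.foldr_append, ih]
    exact iterate_eq_foldr op j (α j) _

lemma coe_add_single (ξ : Fin n → ℤ) (j : Fin n) :
    (fun i => (((ξ + (Pi.single j 1 : Fin n → ℤ)) i : ℤ) : ℝ))
      = (fun i => ((ξ i : ℤ) : ℝ)) + Pi.single j (1:ℝ) := by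
  funext i
  by_cases hij : i = j
  · subst hij
    simp [Pi.single_apply]
  · simp [Pi.single_apply, hij]

lemma fdiff_restr (j : Fin n) (f : (Fin n → ℝ) → ℂ) :
    fdiff j (restr f) = restr (cdiff j f) := by
  funext ξ
  simp only [fdiff, restr, cdiff]
  rw [coe_add_single]

lemma fdiff_restr_iter (j : Fin n) (k : ℕ) (f : (Fin n → ℝ) → ℂ) :
    (fdiff j)^[k] (restr f) = restr ((cdiff j)^[k] f) := by
  induction k with
  | zero => rfl
  | succ k ih =>
    rw [Function.iterate_succ_apply', Function.iterate_succ_apply', ih, fdiff_restr]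

lemma fold_restr (α : Fin n → ℕ) (f : (Fin n → ℝ) → ℂ) :
    ∀ L : List (Fin n),
      ((L.map fun j => (fdiff j)^[α j]).foldr (fun g acc => g ∘ acc) id) (restr f)
        = restr (((L.map fun j => (cdiff j)^[α j]).foldr (fun g acc => g ∘ acc) id) f) := by
  intro L
  induction L with
  | nil => rfl
  | cons j L ih =>
    simp only [List.map_cons, List.foldr_cons, Function.comp_apply, ih, fdiff_restr_iter]

lemma flat_length (α : Fin n → ℕ) :
    ((List.finRange n).flatMap fun j => List.replicate (α j) j).length = ∑ i, α i := by
  simp only [List.length_flatMap, List.map_map, Function.comp_def, List.length_replicate]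
  rw [← List.sum_toFinset _ (List.nodup_finRange n)]
  simp [List.toFinset_finRange]

lemma peetre_aux (y w : Fin n → ℝ) (R : ℝ) (hR : 0 ≤ R) (hw : ∀ i, |w i| ≤ R) :
    Real.sqrt (1 + ∑ i, (y i + w i) ^ 2) ≤
      Real.sqrt (2 * (1 + n * R ^ 2)) * Real.sqrt (1 + ∑ i, y i ^ 2) := by
  rw [← Real.sqrt_mul (by positivity)]
  apply Real.sqrt_le_sqrt
  have h1 : ∑ i, (y i + w i) ^ 2 ≤ ∑ i, (2 * y i ^ 2 + 2 * R ^ 2) := by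
    apply Finset.sum_le_sum
    intro i _
    have h2 : w i ^ 2 ≤ R ^ 2 := by
      have := sq_abs (w i)
      nlinarith [hw i, abs_nonneg (w i)]
    nlinarith [sq_nonneg (y i - w i)]
  have h2 : ∑ i, (2 * y i ^ 2 + 2 * R ^ 2) = 2 * (∑ i, y i ^ 2) + n * (2 * R ^ 2) := by
    rw [Finset.sum_add_distrib, ← Finset.mul_sum, Finset.sum_const]
    simp [mul_comm]
  have h3 : (0 : ℝ) ≤ ∑ i, y i ^ 2 := by positivity
  have h4 : (0 : ℝ) ≤ (n : ℝ) * R ^ 2 := by positivity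
  nlinarith [mul_nonneg h4 h3]

lemma peetre (x v : Fin n → ℝ) (R s : ℝ) (hR : 0 ≤ R) (hv : ∀ i, |v i| ≤ R) :
    Real.sqrt (1 + ∑ i, (x i + v i) ^ 2) ^ s ≤
      Real.sqrt (2 * (1 + n * R ^ 2)) ^ |s| * Real.sqrt (1 + ∑ i, x i ^ 2) ^ s := by
  set A := Real.sqrt (1 + ∑ i, x i ^ 2) with hA
  set A' := Real.sqrt (1 + ∑ i, (x i + v i) ^ 2) with hA'
  set B := Real.sqrt (2 * (1 + n * R ^ 2)) with hB
  have hApos : 0 < A := Real.sqrt_pos.2 (by positivity)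
  have hA'pos : 0 < A' := Real.sqrt_pos.2 (by positivity)
  have hBpos : 0 < B := Real.sqrt_pos.2 (by positivity)
  have hup : A' ≤ B * A := peetre_aux x v R hR hv
  have hdown : A ≤ B * A' := by
    have h := peetre_aux (fun i => x i + v i) (fun i => -v i) R hR (fun i => by
      simpa using hv i)
    simpa [hA, hA', hB] using h
  rcases le_or_gt 0 s with hs | hs
  · rw [abs_of_nonneg hs, ← Real.mul_rpow hBpos.le hApos.le]
    exact Real.rpow_le_rpow hA'pos.le hup hs
  · rw [abs_of_neg hs]
    have hd : A / B ≤ A' := by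
      rw [div_le_iff₀ hBpos]
      linarith [hdown, mul_comm B A']
    have h1 : A' ^ s ≤ (A / B) ^ s :=
      Real.rpow_le_rpow_of_nonpos (div_pos hApos hBpos) hd hs.le
    have h2 : (A / B) ^ s = B ^ (-s) * A ^ s := by
      rw [Real.div_rpow hApos.le hBpos.le, Real.rpow_neg hBpos.le]
      rw [div_eq_mul_inv, mul_comm]
    rw [h2] at h1
    exact h1

end Aux

/-- Euclidean symbol estimates up to order `N` imply the discrete (difference) symbol
estimates for the restriction to the lattice `ℤⁿ`, with constants depending only on the
original ones and on `n, α, m, ρ`. -/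
theorem stmt5 {n N : ℕ} (a : (Fin n → ℝ) → ℂ) (m ρ : ℝ) (hρ0 : 0 ≤ ρ) (hρ1 : ρ ≤ 1)
    (ha : ContDiff ℝ N a)
    (C : (Fin n → ℕ) → ℝ)
    (hC : ∀ α : Fin n → ℕ, ∑ i, α i ≤ N → ∀ ξ : Fin n → ℝ,
      ‖mpd α a ξ‖ ≤ C α * Real.sqrt (1 + ∑ i, ξ i ^ 2) ^ (m - ρ * ∑ i, (α i : ℝ))) :
    ∃ C' : (Fin n → ℕ) → ℝ, ∀ α : Fin n → ℕ, ∑ i, α i ≤ N → ∀ ξ : Fin n → ℤ,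
      ‖mdiff α (fun η => a fun i => (η i : ℝ)) ξ‖ ≤
        C' α * Real.sqrt (1 + ∑ i, (ξ i : ℝ) ^ 2) ^ (m - ρ * ∑ i, (α i : ℝ)) := by
  classical
  refine ⟨fun α => C α * Real.sqrt (2 * (1 + n * ((∑ i, α i : ℕ) : ℝ) ^ 2))
      ^ |m - ρ * ∑ i, (α i : ℝ)|, ?_⟩
  intro α hα ξ
  set s : ℝ := m - ρ * ∑ i, (α i : ℝ) with hs
  set L : List (Fin n) := (List.finRange n).flatMap fun j => List.replicate (α j) j with hL
  have hlen : L.length = ∑ i, α i := flat_length α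
  set x : Fin n → ℝ := fun i => (ξ i : ℝ) with hx
  have hm : mdiff α (fun η => a fun i => (η i : ℝ)) ξ = (L.foldr cdiff a) x := by
    show mdiff α (restr a) ξ = _
    rw [mdiff, fold_restr, foldr_map_iterate]
    rfl
  have hsmooth : ContDiff ℝ ((L.length : ℕ) : ℕ∞) a := by
    refine ha.of_le ?_
    exact_mod_cast hlen ▸ hα
  obtain ⟨v, hv, hle⟩ := keyE L a hsmooth x
  have hpd : L.foldr pd a = mpd α a := (foldr_map_iterate pd α a (List.finRange n)).symm
  set R : ℝ := ((∑ i, α i : ℕ) : ℝ) with hR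
  have hR0 : 0 ≤ R := by positivity
  have hvR : ∀ i, |v i| ≤ R := by
    intro i
    rw [abs_of_nonneg (hv i).1]
    calc v i ≤ (L.length : ℝ) := (hv i).2
      _ = R := by rw [hlen]
  have hQpos : (0 : ℝ) < Real.sqrt (1 + ∑ i, x i ^ 2) ^ s :=
    Real.rpow_pos_of_pos (Real.sqrt_pos.2 (by positivity)) s
  have hCpos : 0 ≤ C α := by
    have h0 := hC α hα 0
    have h1 : (0 : ℝ) ≤ ‖mpd α a 0‖ := norm_nonneg _
    have h2 : (0 : ℝ) < Real.sqrt (1 + ∑ i, (0 : Fin n → ℝ) i ^ 2) ^ (m - ρ * ∑ i, (α i : ℝ)) :=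
      Real.rpow_pos_of_pos (Real.sqrt_pos.2 (by positivity)) _
    nlinarith
  have hbound := hC α hα (x + v)
  have hpe := peetre x v R s hR0 hvR
  calc ‖mdiff α (fun η => a fun i => (η i : ℝ)) ξ‖ = ‖(L.foldr cdiff a) x‖ := by rw [hm]
    _ ≤ ‖(L.foldr pd a) (x + v)‖ := hle
    _ = ‖mpd α a (x + v)‖ := by rw [hpd]
    _ ≤ C α * Real.sqrt (1 + ∑ i, (x + v) i ^ 2) ^ s := hbound
    _ = C α * Real.sqrt (1 + ∑ i, (x i + v i) ^ 2) ^ s := by simp [Pi.add_apply]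
    _ ≤ C α * (Real.sqrt (2 * (1 + n * R ^ 2)) ^ |s| * Real.sqrt (1 + ∑ i, x i ^ 2) ^ s) :=
        mul_le_mul_of_nonneg_left hpe hCpos
    _ = (C α * Real.sqrt (2 * (1 + n * R ^ 2)) ^ |s|) * Real.sqrt (1 + ∑ i, x i ^ 2) ^ s := by
        ring
end

section
/- Limiting norm identity for periodic functions: if P is a continuous 1-periodic function on ℝⁿ and 1 ≤ p < ∞, then lim_{ε → 0⁺} ε^{n/2} ∫_{ℝⁿ} |P(x)|^p e^{-π ε |x|²} dx = ∫_{[0,1]ⁿ} |P(x)|^p dx. -/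
open MeasureTheory Real Filter Complex Set

noncomputable section
namespace Stmt15Aux

variable {n : ℕ}

/-- Gaussian weight. -/
def gauss (n : ℕ) (ε : ℝ) : (Fin n → ℝ) → ℝ := fun x => Real.exp (-(π * ε * ∑ i, x i ^ 2))

/-- The Gaussian average functional (complex valued). -/
def L (n : ℕ) (ε : ℝ) (f : (Fin n → ℝ) → ℂ) : ℂ :=
  (ε ^ ((n : ℝ) / 2)) • ∫ x : Fin n → ℝ, f x * (gauss n ε x : ℂ)

/-- Characters. -/
def char (m : Fin n → ℤ) : (Fin n → ℝ) → ℂ :=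
  fun x => ∏ i, Complex.exp (2 * π * Complex.I * (m i) * (x i))

lemma gauss_prod (ε : ℝ) (x : Fin n → ℝ) :
    (gauss n ε x : ℂ) = ∏ i, Complex.exp (-(π * ε) * (x i) ^ 2) := by
  rw [gauss, Complex.ofReal_exp, ← Complex.exp_sum]
  congr 1
  push_cast
  rw [Finset.mul_sum, ← Finset.sum_neg_distrib]
  simp [neg_mul]

lemma integrable_gauss {ε : ℝ} (hε : 0 < ε) : Integrable (gauss n ε) := by
  have : gauss n ε = fun x => ∏ i, Real.exp (-(π * ε) * (x i) ^ 2) := by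
    funext x
    rw [gauss, ← Real.exp_sum]
    congr 1
    rw [Finset.mul_sum, ← Finset.sum_neg_distrib]
    simp [neg_mul]
  rw [this]
  exact Integrable.fintype_prod (f := fun (_ : Fin n) (t : ℝ) => Real.exp (-(π*ε) * t^2))
    (fun i => by simpa using integrable_exp_neg_mul_sq (by positivity : 0 < π * ε))

end Stmt15Aux

namespace Stmt15Aux

lemma integrand_eq (ε : ℝ) (m : Fin n → ℤ) (x : Fin n → ℝ) :
    char m x * (gauss n ε x : ℂ) =
      ∏ i, Complex.exp ((-(π * ε) : ℂ) * (x i) ^ 2 + (2 * π * Complex.I * (m i)) * (x i) + 0) := by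
  rw [char, gauss_prod, ← Finset.prod_mul_distrib]
  refine Finset.prod_congr rfl fun i _ => ?_
  rw [← Complex.exp_add]
  congr 1
  ring

lemma L_char {ε : ℝ} (hε : 0 < ε) (m : Fin n → ℤ) :
    L n ε (char m) = Real.exp (-(π / ε) * ∑ i, (m i : ℝ) ^ 2) := by
  have hb : ((-(π * ε) : ℂ)).re < 0 := by
    have : ((-(π * ε) : ℂ)) = ((-(π * ε) : ℝ) : ℂ) := by push_cast; ring
    rw [this, Complex.ofReal_re]
    nlinarith [pi_pos]
  have key : ∫ x : Fin n → ℝ, char m x * (gauss n ε x : ℂ)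
      = ∏ i, ((π / (π * ε) : ℂ) ^ (1/2 : ℂ) *
          Complex.exp (0 - (2 * π * Complex.I * (m i))^2 / (4 * (-(π * ε) : ℂ)))) := by
    simp_rw [integrand_eq ε m]
    rw [integral_fintype_prod_volume_eq_prod (𝕜 := ℂ)
      (f := fun i (t : ℝ) => Complex.exp ((-(π * ε) : ℂ) * (t : ℂ) ^ 2 + (2 * π * Complex.I * (m i)) * t + 0))]
    refine Finset.prod_congr rfl fun i _ => ?_
    rw [integral_cexp_quadratic hb]
    norm_num
  have hπ : (π:ℂ) ≠ 0 := by exact_mod_cast pi_ne_zero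
  have hε' : (ε:ℂ) ≠ 0 := by exact_mod_cast hε.ne'
  have hA : ((π : ℂ) / (π * ε)) ^ (1/2 : ℂ) = ((( 1/ε : ℝ) ^ (1/2 : ℝ) : ℝ) : ℂ) := by
    rw [Complex.ofReal_cpow (by positivity) (1/2 : ℝ)]
    push_cast
    congr 1
    field_simp
  have hexp : ∀ i : Fin n, (0 : ℂ) - (2 * π * Complex.I * (m i))^2 / (4 * (-(π * ε) : ℂ))
      = ((-(π/ε) * (m i : ℝ)^2 : ℝ) : ℂ) := by
    intro i
    push_cast
    rw [mul_pow, mul_pow, Complex.I_sq]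
    field_simp
    ring
  simp_rw [L, key, hA, hexp, Finset.prod_mul_distrib, Finset.prod_const, ← Complex.exp_sum,
    ← Complex.ofReal_sum, ← Complex.ofReal_pow, ← Finset.mul_sum, Complex.real_smul,
    ← Complex.ofReal_exp, ← Complex.ofReal_mul]
  norm_cast
  simp only [Finset.card_univ, Fintype.card_fin]
  rw [← Real.rpow_natCast ((1/ε) ^ (1/2 : ℝ)) n, ← Real.rpow_mul (by positivity)]
  rw [show (1/2 : ℝ) * n = (n : ℝ)/2 by ring]
  rw [← mul_assoc, ← Real.mul_rpow hε.le (by positivity), mul_one_div, div_self hε.ne',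
    Real.one_rpow, one_mul]

end Stmt15Aux

namespace Stmt15Aux

lemma char_zero_eq : char (0 : Fin n → ℤ) = fun _ => (1 : ℂ) := by
  funext x
  simp [char]

lemma integral_gauss {ε : ℝ} (hε : 0 < ε) :
    ∫ x : Fin n → ℝ, gauss n ε x = ε ^ (-((n : ℝ)/2)) := by
  have h := L_char hε (0 : Fin n → ℤ)
  rw [char_zero_eq] at h
  simp only [L, one_mul] at h
  rw [show (∫ x : Fin n → ℝ, ((gauss n ε x : ℝ) : ℂ)) = ((∫ x : Fin n → ℝ, gauss n ε x : ℝ) : ℂ)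
    from integral_ofReal] at h
  norm_num at h
  rw [← Complex.ofReal_mul, show (1:ℂ) = ((1:ℝ):ℂ) by norm_num] at h
  have h3 := Complex.ofReal_injective h
  have hpos : (0:ℝ) < ε ^ ((n:ℝ)/2) := Real.rpow_pos_of_pos hε _
  rw [Real.rpow_neg hε.le]
  field_simp at h3 ⊢
  linarith [h3]

lemma gauss_nonneg (ε : ℝ) (x : Fin n → ℝ) : 0 ≤ gauss n ε x := Real.exp_nonneg _

lemma integrable_mul_gauss {ε : ℝ} (hε : 0 < ε) {f : (Fin n → ℝ) → ℂ}
    (hf : AEStronglyMeasurable f (volume : Measure (Fin n → ℝ))) {C : ℝ} (hC : ∀ x, ‖f x‖ ≤ C) :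
    Integrable (fun x => f x * (gauss n ε x : ℂ)) :=
  ((integrable_gauss hε).ofReal).bdd_mul hf (Eventually.of_forall hC)

lemma L_norm_le {ε : ℝ} (hε : 0 < ε) {f : (Fin n → ℝ) → ℂ} {C : ℝ}
    (hC : ∀ x, ‖f x‖ ≤ C) : ‖L n ε f‖ ≤ C := by
  have hC0 : 0 ≤ C := le_trans (norm_nonneg _) (hC 0)
  have hεp : (0:ℝ) < ε ^ ((n:ℝ)/2) := Real.rpow_pos_of_pos hε _
  have hnorm : ‖L n ε f‖ ≤ ε ^ ((n:ℝ)/2) * ∫ x, ‖f x * (gauss n ε x : ℂ)‖ := by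
    rw [L, norm_smul, Real.norm_of_nonneg hεp.le]
    exact mul_le_mul_of_nonneg_left (norm_integral_le_integral_norm _) hεp.le
  have hbd : ∫ x, ‖f x * (gauss n ε x : ℂ)‖ ≤ C * ε ^ (-((n:ℝ)/2)) := by
    have : ∫ x, ‖f x * (gauss n ε x : ℂ)‖ ≤ ∫ x, C * gauss n ε x := by
      refine integral_mono_of_nonneg (Eventually.of_forall fun x => norm_nonneg _)
        ((integrable_gauss hε).const_mul C) (Eventually.of_forall fun x => ?_)
      dsimp only
      rw [norm_mul, Complex.norm_real, Real.norm_of_nonneg (gauss_nonneg ε x)]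
      exact mul_le_mul_of_nonneg_right (hC x) (Real.exp_nonneg _)
    rwa [integral_const_mul, integral_gauss hε] at this
  calc ‖L n ε f‖ ≤ ε ^ ((n:ℝ)/2) * (C * ε ^ (-((n:ℝ)/2))) :=
        le_trans hnorm (mul_le_mul_of_nonneg_left hbd hεp.le)
    _ = C * (ε ^ ((n:ℝ)/2) * ε ^ (-((n:ℝ)/2))) := by ring
    _ = C := by
        rw [← Real.rpow_add hε, add_neg_cancel, Real.rpow_zero, mul_one]

end Stmt15Aux

namespace Stmt15Aux

lemma oneD_char (k : ℤ) :
    ∫ t in Icc (0:ℝ) 1, Complex.exp (2 * π * Complex.I * k * t) = if k = 0 then 1 else 0 := by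
  rw [MeasureTheory.integral_Icc_eq_integral_Ioc,
    ← intervalIntegral.integral_of_le (zero_le_one (α := ℝ))]
  by_cases hk : k = 0
  · simp [hk]
  · have hc : (2 * (π:ℂ) * Complex.I * (k:ℂ)) ≠ 0 := by
      simp [Complex.I_ne_zero, Real.pi_ne_zero, hk]
    rw [if_neg hk]
    have : ∀ t : ℝ, Complex.exp (2 * π * Complex.I * k * t)
        = Complex.exp ((2 * (π:ℂ) * Complex.I * (k:ℂ)) * t) := fun t => rfl
    rw [intervalIntegral.integral_congr (fun t _ => this t),
      integral_exp_mul_complex hc]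
    have h1 : Complex.exp ((2 * (π:ℂ) * Complex.I * (k:ℂ)) * (1:ℝ)) = 1 := by
      rw [show (2 * (π:ℂ) * Complex.I * (k:ℂ)) * (1:ℝ) = (k:ℂ) * (2 * π * Complex.I) by
        push_cast; ring]
      exact Complex.exp_int_mul_two_pi_mul_I k
    rw [h1]
    norm_num

lemma mem_Icc_pi_iff (x : Fin n → ℝ) :
    x ∈ Icc (0 : Fin n → ℝ) 1 ↔ ∀ i, x i ∈ Icc (0:ℝ) 1 := by
  simp only [Set.mem_Icc, Pi.le_def, Pi.zero_apply, Pi.one_apply, forall_and]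

lemma cube_char (m : Fin n → ℤ) :
    ∫ x in Icc (0 : Fin n → ℝ) 1, char m x = if m = 0 then 1 else 0 := by
  have hind : (Icc (0 : Fin n → ℝ) 1).indicator (char m)
      = fun x => ∏ i, (Icc (0:ℝ) 1).indicator (fun t => Complex.exp (2 * π * Complex.I * (m i) * t)) (x i) := by
    funext x
    by_cases hx : x ∈ Icc (0 : Fin n → ℝ) 1
    · rw [Set.indicator_of_mem hx]
      rw [char]
      refine Finset.prod_congr rfl fun i _ => ?_
      rw [Set.indicator_of_mem ((mem_Icc_pi_iff x).mp hx i)]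
    · rw [Set.indicator_of_notMem hx]
      obtain ⟨i, hi⟩ := not_forall.mp (fun h => hx ((mem_Icc_pi_iff x).mpr h))
      exact (Finset.prod_eq_zero (Finset.mem_univ i) (Set.indicator_of_notMem hi _)).symm
  rw [← MeasureTheory.integral_indicator measurableSet_Icc, hind,
    integral_fintype_prod_volume_eq_prod (𝕜 := ℂ)
      (f := fun i (t : ℝ) => (Icc (0:ℝ) 1).indicator (fun s => Complex.exp (2 * π * Complex.I * (m i) * s)) t)]
  have : ∀ i : Fin n, (∫ t : ℝ, (Icc (0:ℝ) 1).indicator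
      (fun s => Complex.exp (2 * π * Complex.I * (m i) * s)) t) = if m i = 0 then 1 else 0 := by
    intro i
    rw [MeasureTheory.integral_indicator measurableSet_Icc]
    exact oneD_char (m i)
  simp_rw [this]
  by_cases hm : m = 0
  · simp [hm]
  · rw [if_neg hm]
    obtain ⟨i, hi⟩ := Function.ne_iff.mp hm
    exact Finset.prod_eq_zero (Finset.mem_univ i) (if_neg hi)

lemma tendsto_L_char (m : Fin n → ℤ) :
    Tendsto (fun ε => L n ε (char m)) (nhdsWithin 0 (Set.Ioi 0))
      (nhds (∫ x in Icc (0 : Fin n → ℝ) 1, char m x)) := by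
  rw [cube_char]
  have hcong : ∀ᶠ ε in nhdsWithin (0:ℝ) (Set.Ioi 0),
      ((Real.exp (-(π/ε) * ∑ i, (m i:ℝ)^2) : ℝ) : ℂ) = L n ε (char m) := by
    filter_upwards [self_mem_nhdsWithin] with ε hε
    exact (L_char hε m).symm
  refine Tendsto.congr' hcong ?_
  by_cases hm : m = 0
  · simp only [hm, if_pos]
    have : ∀ ε : ℝ, ((Real.exp (-(π/ε) * ∑ i, ((0: Fin n → ℤ) i:ℝ)^2) : ℝ) : ℂ) = 1 := by
      intro ε; norm_num
    simp_rw [this]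
    exact tendsto_const_nhds
  · rw [if_neg hm]
    have hS : 0 < ∑ i, (m i:ℝ)^2 := by
      obtain ⟨i, hi⟩ := Function.ne_iff.mp hm
      refine Finset.sum_pos' (fun j _ => by positivity) ⟨i, Finset.mem_univ i, ?_⟩
      have : (m i : ℝ) ≠ 0 := Int.cast_ne_zero.mpr hi
      positivity
    have h1 : Tendsto (fun ε : ℝ => -(π/ε) * ∑ i, (m i:ℝ)^2) (nhdsWithin 0 (Set.Ioi 0)) atBot := by
      have h2 : Tendsto (fun ε : ℝ => (-(π * ∑ i, (m i:ℝ)^2)) * ε⁻¹) (nhdsWithin 0 (Set.Ioi 0)) atBot :=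
        Tendsto.const_mul_atTop_of_neg (by nlinarith [pi_pos]) tendsto_inv_nhdsGT_zero
      refine h2.congr fun ε => by rw [div_eq_mul_inv]; ring
    have h3 : Tendsto (fun ε : ℝ => Real.exp (-(π/ε) * ∑ i, (m i:ℝ)^2))
        (nhdsWithin 0 (Set.Ioi 0)) (nhds 0) := Real.tendsto_exp_atBot.comp h1
    have h4 := (Complex.continuous_ofReal.tendsto 0).comp h3
    rw [show ((0:ℂ)) = ((0:ℝ):ℂ) by norm_num]
    exact h4

end Stmt15Aux

namespace Stmt15Aux

theorem fact_zero_lt_one_real : Fact ((0:ℝ) < 1) := ⟨one_pos⟩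

attribute [local instance] fact_zero_lt_one_real

/-- The quotient map to the torus. -/
def qmap (n : ℕ) : (Fin n → ℝ) → (Fin n → AddCircle (1:ℝ)) := fun x i => (x i : AddCircle (1:ℝ))

lemma qmap_oq (n : ℕ) : IsOpenQuotientMap (qmap n) :=
  IsOpenQuotientMap.piMap fun _ => QuotientAddGroup.isOpenQuotientMap_mk

/-- Characters on the torus. -/
def tchar (m : Fin n → ℤ) : C((Fin n → AddCircle (1:ℝ)), ℂ) :=
  ⟨fun z => ∏ i, fourier (m i) (z i),
   continuous_finset_prod _ fun i _ => (fourier (m i)).continuous.comp (continuous_apply i)⟩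

lemma tchar_comp_qmap (m : Fin n → ℤ) (x : Fin n → ℝ) : tchar m (qmap n x) = char m x := by
  simp only [tchar, qmap, char, ContinuousMap.coe_mk]
  refine Finset.prod_congr rfl fun i _ => ?_
  rw [fourier_coe_apply]
  push_cast
  ring_nf

lemma tchar_zero : tchar (0 : Fin n → ℤ) = 1 := by
  ext z
  simp [tchar, fourier_zero]

lemma tchar_mul (m m' : Fin n → ℤ) : tchar m * tchar m' = tchar (m + m') := by
  ext z
  simp only [tchar, ContinuousMap.mul_apply, ContinuousMap.coe_mk, ← Finset.prod_mul_distrib]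
  exact (Finset.prod_congr rfl fun i _ => by rw [Pi.add_apply, fourier_add]).symm

lemma tchar_star (m : Fin n → ℤ) : star (tchar m) = tchar (-m) := by
  ext z
  simp only [tchar, ContinuousMap.star_apply, ContinuousMap.coe_mk, Pi.neg_apply]
  rw [show (star (∏ i, fourier (m i) (z i)) : ℂ) = ∏ i, (starRingEnd ℂ) (fourier (m i) (z i))
    from map_prod (starRingEnd ℂ) _ _]
  exact (Finset.prod_congr rfl fun i _ => by rw [fourier_neg]).symm

lemma descend (f : (Fin n → ℝ) → ℂ) (hf : Continuous f)
    (hper : ∀ (x : Fin n → ℝ) (k : Fin n → ℤ), f (x + fun i => (k i : ℝ)) = f x) :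
    ∃ F : C((Fin n → AddCircle (1:ℝ)), ℂ), ∀ x, F (qmap n x) = f x := by
  classical
  set rep : (Fin n → AddCircle (1:ℝ)) → (Fin n → ℝ) :=
    fun z i => ((AddCircle.equivIco 1 0 (z i) : Ico (0:ℝ) (0+1)) : ℝ) with hrep
  have hcomp : ∀ x : Fin n → ℝ, f (rep (qmap n x)) = f x := by
    intro x
    have : rep (qmap n x) = x + fun i => ((- ⌊x i⌋ : ℤ) : ℝ) := by
      funext i
      simp only [hrep, qmap, AddCircle.coe_equivIco_mk_apply]
      rw [div_one, mul_one, Int.fract]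
      simp only [Pi.add_apply, Int.cast_neg]
      ring
    rw [this, hper]
  refine ⟨⟨fun z => f (rep z), ?_⟩, fun x => hcomp x⟩
  rw [(qmap_oq n).isQuotientMap.continuous_iff]
  have : (fun z => f (rep z)) ∘ qmap n = f := funext hcomp
  rw [this]
  exact hf

end Stmt15Aux

namespace Stmt15Aux

attribute [local instance] fact_zero_lt_one_real

/-- Span of characters. -/
def M (n : ℕ) : Submodule ℂ C((Fin n → AddCircle (1:ℝ)), ℂ) :=
  Submodule.span ℂ (Set.range (tchar (n := n)))

lemma tchar_mem_M (m : Fin n → ℤ) : tchar m ∈ M n :=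
  Submodule.subset_span ⟨m, rfl⟩

lemma tchar_mul_mem (m : Fin n → ℤ) {h : C((Fin n → AddCircle (1:ℝ)), ℂ)} (hh : h ∈ M n) :
    tchar m * h ∈ M n := by
  induction hh using Submodule.span_induction with
  | mem g hg => obtain ⟨m', rfl⟩ := hg; rw [tchar_mul]; exact tchar_mem_M _
  | zero => rw [mul_zero]; exact zero_mem _
  | add g₁ g₂ _ _ h₁ h₂ => rw [mul_add]; exact add_mem h₁ h₂
  | smul c g _ hg => rw [mul_smul_comm]; exact Submodule.smul_mem _ _ hg

lemma mul_mem_M {g h : C((Fin n → AddCircle (1:ℝ)), ℂ)} (hg : g ∈ M n) (hh : h ∈ M n) :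
    g * h ∈ M n := by
  induction hg using Submodule.span_induction with
  | mem g' hg' => obtain ⟨m, rfl⟩ := hg'; exact tchar_mul_mem m hh
  | zero => rw [zero_mul]; exact zero_mem _
  | add g₁ g₂ _ _ h₁ h₂ => rw [add_mul]; exact add_mem h₁ h₂
  | smul c g' _ hg' => rw [smul_mul_assoc]; exact Submodule.smul_mem _ _ hg'

lemma star_mem_M {g : C((Fin n → AddCircle (1:ℝ)), ℂ)} (hg : g ∈ M n) : star g ∈ M n := by
  induction hg using Submodule.span_induction with
  | mem g' hg' => obtain ⟨m, rfl⟩ := hg'; rw [tchar_star]; exact tchar_mem_M _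
  | zero => rw [star_zero]; exact zero_mem _
  | add g₁ g₂ _ _ h₁ h₂ => rw [star_add]; exact add_mem h₁ h₂
  | smul c g' _ hg' => rw [star_smul]; exact Submodule.smul_mem _ _ hg'

lemma adjoin_le_M {g : C((Fin n → AddCircle (1:ℝ)), ℂ)}
    (hg : g ∈ StarAlgebra.adjoin ℂ (Set.range (tchar (n := n)))) : g ∈ M n := by
  induction hg using StarAlgebra.adjoin_induction with
  | mem g' hg' => exact Submodule.subset_span hg'
  | algebraMap r =>
      rw [Algebra.algebraMap_eq_smul_one, ← tchar_zero]
      exact Submodule.smul_mem _ _ (tchar_mem_M 0)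
  | add g₁ g₂ _ _ h₁ h₂ => exact add_mem h₁ h₂
  | mul g₁ g₂ _ _ h₁ h₂ => exact mul_mem_M h₁ h₂
  | star g' _ h' => exact star_mem_M h'

lemma adjoin_sep :
    (StarAlgebra.adjoin ℂ (Set.range (tchar (n := n)))).SeparatesPoints := by
  intro z w hzw
  obtain ⟨i, hi⟩ := Function.ne_iff.mp hzw
  refine ⟨tchar (Pi.single i 1), ⟨tchar (Pi.single i 1),
    StarAlgebra.subset_adjoin ℂ _ ⟨Pi.single i 1, rfl⟩, rfl⟩, ?_⟩
  have heval : ∀ v : Fin n → AddCircle (1:ℝ), tchar (Pi.single i 1) v = fourier 1 (v i) := by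
    intro v
    rw [tchar, ContinuousMap.coe_mk]
    rw [Finset.prod_eq_single i (fun j _ hj => by
      rw [Pi.single_eq_of_ne hj, fourier_zero]) (fun h => absurd (Finset.mem_univ i) h)]
    rw [Pi.single_eq_same]
  rw [heval, heval]
  simp only [fourier_apply, one_zsmul]
  intro hcon
  exact hi (AddCircle.injective_toCircle one_ne_zero (Circle.coe_inj.mp hcon))

end Stmt15Aux

namespace Stmt15Aux

attribute [local instance] fact_zero_lt_one_real

/-- The convergence property. -/
def Phi {n : ℕ} (g : C((Fin n → AddCircle (1:ℝ)), ℂ)) : Prop :=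
  Tendsto (fun ε => L n ε (fun x => g (qmap n x))) (nhdsWithin 0 (Set.Ioi 0))
    (nhds (∫ x in Icc (0 : Fin n → ℝ) 1, g (qmap n x)))

lemma integrable_comp_mul_gauss {ε : ℝ} (hε : 0 < ε) (g : C((Fin n → AddCircle (1:ℝ)), ℂ)) :
    Integrable (fun x => g (qmap n x) * (gauss n ε x : ℂ)) :=
  integrable_mul_gauss hε
    ((g.continuous.comp (qmap_oq n).continuous).aestronglyMeasurable)
    (fun x => g.norm_coe_le_norm (qmap n x))

lemma integrableOn_comp (g : C((Fin n → AddCircle (1:ℝ)), ℂ)) :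
    IntegrableOn (fun x => g (qmap n x)) (Icc (0 : Fin n → ℝ) 1) :=
  ((g.continuous.comp (qmap_oq n).continuous).continuousOn).integrableOn_compact isCompact_Icc

lemma Phi_tchar (m : Fin n → ℤ) : Phi (tchar m) := by
  unfold Phi
  simp_rw [tchar_comp_qmap]
  exact tendsto_L_char m

lemma Phi_zero : Phi (0 : C((Fin n → AddCircle (1:ℝ)), ℂ)) := by
  unfold Phi
  simp only [ContinuousMap.zero_apply]
  have : ∀ ε : ℝ, L n ε (fun _ => (0:ℂ)) = 0 := by
    intro ε
    simp [L]
  simp_rw [this, integral_zero]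
  exact tendsto_const_nhds

lemma Phi_add {g h : C((Fin n → AddCircle (1:ℝ)), ℂ)} (hg : Phi g) (hh : Phi h) :
    Phi (g + h) := by
  unfold Phi
  have hlim : ∫ x in Icc (0 : Fin n → ℝ) 1, (g + h) (qmap n x)
      = (∫ x in Icc (0 : Fin n → ℝ) 1, g (qmap n x))
        + ∫ x in Icc (0 : Fin n → ℝ) 1, h (qmap n x) := by
    simp_rw [ContinuousMap.add_apply]
    exact integral_add (integrableOn_comp g) (integrableOn_comp h)
  rw [hlim]
  refine Tendsto.congr' ?_ (hg.add hh)
  filter_upwards [self_mem_nhdsWithin] with ε (hε : 0 < ε)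
  simp only [L, ContinuousMap.add_apply]
  rw [show (∫ x : Fin n → ℝ, (g (qmap n x) + h (qmap n x)) * (gauss n ε x : ℂ))
      = (∫ x : Fin n → ℝ, g (qmap n x) * (gauss n ε x : ℂ))
        + ∫ x : Fin n → ℝ, h (qmap n x) * (gauss n ε x : ℂ) by
    rw [← integral_add (integrable_comp_mul_gauss hε g) (integrable_comp_mul_gauss hε h)]
    congr 1; funext x; ring]
  rw [smul_add]

lemma Phi_smul (c : ℂ) {g : C((Fin n → AddCircle (1:ℝ)), ℂ)} (hg : Phi g) :
    Phi (c • g) := by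
  unfold Phi
  have hlim : ∫ x in Icc (0 : Fin n → ℝ) 1, (c • g) (qmap n x)
      = c • ∫ x in Icc (0 : Fin n → ℝ) 1, g (qmap n x) := by
    simp_rw [ContinuousMap.smul_apply]
    exact integral_smul c _
  rw [hlim]
  have : ∀ ε : ℝ, L n ε (fun x => (c • g) (qmap n x)) = c • L n ε (fun x => g (qmap n x)) := by
    intro ε
    simp only [L, ContinuousMap.smul_apply]
    rw [show (∫ x : Fin n → ℝ, (c • g (qmap n x)) * (gauss n ε x : ℂ))
        = c • ∫ x : Fin n → ℝ, g (qmap n x) * (gauss n ε x : ℂ) by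
      rw [← integral_smul]
      congr 1; funext x; rw [smul_eq_mul, smul_eq_mul]; ring]
    rw [smul_comm]
  simp_rw [this]
  exact hg.const_smul c

lemma Phi_of_mem_M {g : C((Fin n → AddCircle (1:ℝ)), ℂ)} (hg : g ∈ M n) : Phi g := by
  induction hg using Submodule.span_induction with
  | mem g' hg' => obtain ⟨m, rfl⟩ := hg'; exact Phi_tchar m
  | zero => exact Phi_zero
  | add g₁ g₂ _ _ h₁ h₂ => exact Phi_add h₁ h₂
  | smul c g' _ hg' => exact Phi_smul c hg'

end Stmt15Aux

namespace Stmt15Aux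

attribute [local instance] fact_zero_lt_one_real

lemma key (f : (Fin n → ℝ) → ℂ) (hf : Continuous f)
    (hper : ∀ (x : Fin n → ℝ) (k : Fin n → ℤ), f (x + fun i => (k i : ℝ)) = f x) :
    Tendsto (fun ε => L n ε f) (nhdsWithin 0 (Set.Ioi 0))
      (nhds (∫ x in Icc (0 : Fin n → ℝ) 1, f x)) := by
  obtain ⟨F, hF⟩ := descend f hf hper
  have hvol : (volume (Icc (0 : Fin n → ℝ) 1)).toReal = 1 := by
    rw [Real.volume_Icc_pi_toReal (fun i => by norm_num)]
    simp
  have hfIntOn : IntegrableOn f (Icc (0 : Fin n → ℝ) 1) :=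
    hf.continuousOn.integrableOn_compact isCompact_Icc
  rw [Metric.tendsto_nhds]
  intro δ hδ
  have htop := ContinuousMap.starSubalgebra_topologicalClosure_eq_top_of_separatesPoints
      (StarAlgebra.adjoin ℂ (Set.range (tchar (n := n)))) adjoin_sep
  have hFmem : F ∈ closure ((StarAlgebra.adjoin ℂ (Set.range (tchar (n := n))) : Set _)) := by
    have h1 : F ∈ (StarAlgebra.adjoin ℂ (Set.range (tchar (n := n)))).topologicalClosure := by
      rw [htop]; trivial
    exact h1
  obtain ⟨a, haA, hdist⟩ := Metric.mem_closure_iff.mp hFmem (δ/4) (by linarith)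
  have haM : a ∈ M n := adjoin_le_M haA
  have hPhi := Phi_of_mem_M haM
  have hbound : ∀ x : Fin n → ℝ, ‖f x - a (qmap n x)‖ ≤ δ/4 := by
    intro x
    rw [← hF x]
    have h2 : F (qmap n x) - a (qmap n x) = (F - a) (qmap n x) := by simp
    rw [h2]
    refine le_trans ((F - a).norm_coe_le_norm _) ?_
    rw [show ‖F - a‖ = dist F a from (dist_eq_norm F a).symm]
    linarith
  have hfbd : ∀ x : Fin n → ℝ, ‖f x‖ ≤ ‖F‖ := by
    intro x
    rw [← hF x]
    exact F.norm_coe_le_norm _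
  have hev := Metric.tendsto_nhds.mp hPhi (δ/4) (by linarith)
  filter_upwards [hev, self_mem_nhdsWithin] with ε h1 hε'
  have hε : 0 < ε := hε'
  have hfint : Integrable (fun x => f x * (gauss n ε x : ℂ)) :=
    integrable_mul_gauss hε hf.aestronglyMeasurable hfbd
  have hdiff1 : ‖L n ε f - L n ε (fun x => a (qmap n x))‖ ≤ δ/4 := by
    have h3 : L n ε f - L n ε (fun x => a (qmap n x))
        = L n ε (fun x => f x - a (qmap n x)) := by
      simp only [L]
      rw [← smul_sub]
      congr 1
      rw [← integral_sub hfint (integrable_comp_mul_gauss hε a)]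
      congr 1; funext x; ring
    rw [h3]
    exact L_norm_le hε hbound
  have hdiff2 : ‖(∫ x in Icc (0 : Fin n → ℝ) 1, a (qmap n x))
      - ∫ x in Icc (0 : Fin n → ℝ) 1, f x‖ ≤ δ/4 := by
    rw [← integral_sub (integrableOn_comp a) hfIntOn]
    have h4 := norm_setIntegral_le_of_norm_le_const (μ := volume)
      (s := Icc (0 : Fin n → ℝ) 1) (measure_Icc_lt_top)
      (f := fun x => a (qmap n x) - f x) (C := δ/4)
      (fun x _ => by rw [norm_sub_rev]; exact hbound x)
    rwa [measureReal_def, hvol, mul_one] at h4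
  have : dist (L n ε f) (∫ x in Icc (0 : Fin n → ℝ) 1, f x)
      ≤ ‖L n ε f - L n ε (fun x => a (qmap n x))‖
        + dist (L n ε (fun x => a (qmap n x))) (∫ x in Icc (0 : Fin n → ℝ) 1, a (qmap n x))
        + ‖(∫ x in Icc (0 : Fin n → ℝ) 1, a (qmap n x)) - ∫ x in Icc (0 : Fin n → ℝ) 1, f x‖ := by
    rw [dist_eq_norm, dist_eq_norm]
    have := norm_add₃_le (a := L n ε f - L n ε (fun x => a (qmap n x)))
      (b := L n ε (fun x => a (qmap n x)) - ∫ x in Icc (0 : Fin n → ℝ) 1, a (qmap n x))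
      (c := (∫ x in Icc (0 : Fin n → ℝ) 1, a (qmap n x)) - ∫ x in Icc (0 : Fin n → ℝ) 1, f x)
    simpa using this
  calc dist (L n ε f) (∫ x in Icc (0 : Fin n → ℝ) 1, f x) ≤ _ := this
    _ < δ/4 + δ/4 + δ/4 := by
        refine add_lt_add_of_lt_of_le (add_lt_add_of_le_of_lt hdiff1 h1) hdiff2
    _ < δ := by linarith

end Stmt15Aux

/-- Limiting norm identity: for continuous 1-periodic `P` and `1 ≤ p < ∞`,
`ε^{n/2} ∫_{ℝⁿ} |P(x)|^p e^{-π ε |x|²} dx → ∫_{[0,1]ⁿ} |P(x)|^p dx` as `ε → 0⁺`. -/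
theorem stmt15 {n : ℕ} (P : (Fin n → ℝ) → ℂ) (hP : Continuous P)
    (hper : ∀ (x : Fin n → ℝ) (k : Fin n → ℤ), P (x + fun i => (k i : ℝ)) = P x)
    (p : ℝ) (hp : 1 ≤ p) :
    Tendsto (fun ε : ℝ =>
        ε ^ ((n : ℝ) / 2) *
          ∫ x : Fin n → ℝ, ‖P x‖ ^ p * Real.exp (-(π * ε * ∑ i, x i ^ 2)))
      (nhdsWithin 0 (Set.Ioi 0)) (nhds (∫ x in Set.Icc (0 : Fin n → ℝ) 1, ‖P x‖ ^ p)) := by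
  have hcont : Continuous (fun x : Fin n → ℝ => ‖P x‖ ^ p) :=
    (hP.norm).rpow_const (fun x => Or.inr (by linarith))
  set f : (Fin n → ℝ) → ℂ := fun x => ((‖P x‖ ^ p : ℝ) : ℂ) with hfdef
  have hfc : Continuous f := Complex.continuous_ofReal.comp hcont
  have hfper : ∀ (x : Fin n → ℝ) (k : Fin n → ℤ), f (x + fun i => (k i : ℝ)) = f x := by
    intro x k
    simp only [hfdef]
    rw [hper]
  have hkey := Stmt15Aux.key f hfc hfper
  have hL : ∀ ε : ℝ, Stmt15Aux.L n ε f
      = (((ε ^ ((n:ℝ)/2) *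
          ∫ x : Fin n → ℝ, ‖P x‖ ^ p * Real.exp (-(π * ε * ∑ i, x i ^ 2)) : ℝ)) : ℂ) := by
    intro ε
    rw [Stmt15Aux.L]
    have h5 : (fun x : Fin n → ℝ => f x * ((Stmt15Aux.gauss n ε x : ℝ) : ℂ))
        = fun x => ((‖P x‖ ^ p * Stmt15Aux.gauss n ε x : ℝ) : ℂ) := by
      funext x
      rw [hfdef]
      push_cast
      ring
    rw [h5, show (∫ x : Fin n → ℝ, ((‖P x‖ ^ p * Stmt15Aux.gauss n ε x : ℝ) : ℂ))
        = (((∫ x : Fin n → ℝ, ‖P x‖ ^ p * Stmt15Aux.gauss n ε x : ℝ)) : ℂ) from integral_ofReal]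
    rw [Complex.real_smul, ← Complex.ofReal_mul]
    rfl
  have hI : (∫ x in Set.Icc (0:Fin n → ℝ) 1, f x)
      = (((∫ x in Set.Icc (0:Fin n → ℝ) 1, ‖P x‖ ^ p : ℝ)) : ℂ) := integral_ofReal
  rw [hI] at hkey
  simp_rw [hL] at hkey
  have hre := (Complex.continuous_re.tendsto _).comp hkey
  rw [Complex.ofReal_re] at hre
  exact hre.congr fun ε => Complex.ofReal_re _
end
end
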